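/- arXiv:2512.04402 — 3 statements merged into one kernel-verified Lean document; each statement's English description precedes it below -/
import Mathlib

section
/- If ℓ = t(n−1) + 2, m − 2 is not divisible by n − 1, and T is a tree on n vertices with T ≠ K_{1,n−1}, then r(K_{1,ℓ}, T, K_m) = (ℓ + n − 3)(m−1) + 1 = (t+1)(n−1)(m−1) + 1. -/
open SimpleGraph
open scoped Classical

/-- `H` embeds into `G`: there is an injective graph homomorphism from `H` to `G`. -/
def Copies {α : Type*} {β : Type*} (H : SimpleGraph α) (G : SimpleGraph β) : Prop :=
  ∃ f : α → β, Function.Injective f ∧ ∀ ⦃a b : α⦄, H.Adj a b → G.Adj (f a) (f b)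

/-- the star `K_{1,ℓ}` with `ℓ` leaves and center `0`. -/
def starGraph (ℓ : ℕ) : SimpleGraph (Fin (ℓ + 1)) :=
  SimpleGraph.fromRel (fun a _ => a = 0)

/-- the graph of color `i` for a symmetric edge-coloring `c`. -/
def colorGraph {N k : ℕ} (c : Fin N → Fin N → Fin k) (i : Fin k) : SimpleGraph (Fin N) :=
  SimpleGraph.fromRel (fun a b => c a b = i)

/-- `K_N → (G₁, G₂)`: every red-blue coloring of `E(K_N)` yields a red `G₁` or a blue `G₂`. -/
def RamseyProp2 {α β : Type*} (N : ℕ) (G₁ : SimpleGraph α) (G₂ : SimpleGraph β) : Prop :=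
  ∀ R : SimpleGraph (Fin N), Copies G₁ R ∨ Copies G₂ Rᶜ

/-- the 2-color Ramsey number `r(G₁, G₂)`. -/
noncomputable def ramsey2 {α β : Type*} (G₁ : SimpleGraph α) (G₂ : SimpleGraph β) : ℕ :=
  sInf {N | RamseyProp2 N G₁ G₂}

/-- `K_N → (G₁, G₂, G₃)` for 3-colorings. -/
def RamseyProp3 {α β γ : Type*} (N : ℕ) (G₁ : SimpleGraph α) (G₂ : SimpleGraph β)
    (G₃ : SimpleGraph γ) : Prop :=
  ∀ c : Fin N → Fin N → Fin 3, (∀ a b, c a b = c b a) →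
    Copies G₁ (colorGraph c 0) ∨ Copies G₂ (colorGraph c 1) ∨ Copies G₃ (colorGraph c 2)

/-- the 3-color Ramsey number `r(G₁, G₂, G₃)`. -/
noncomputable def ramsey3 {α β γ : Type*} (G₁ : SimpleGraph α) (G₂ : SimpleGraph β)
    (G₃ : SimpleGraph γ) : ℕ :=
  sInf {N | RamseyProp3 N G₁ G₂ G₃}

/-- the chromatic number as a natural number. -/
noncomputable def chrom {β : Type*} (H : SimpleGraph β) : ℕ :=
  sInf {k | H.Colorable k}

/-- the surplus `s(H)`: the minimum size of a color class over proper colorings of `H`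
with `chrom H` colors. -/
noncomputable def surplus {β : Type*} [Fintype β] (H : SimpleGraph β) : ℕ :=
  sInf {s | ∃ C : H.Coloring (Fin (chrom H)), ∃ i : Fin (chrom H),
    s = (Finset.univ.filter (fun v => C v = i)).card}

set_option linter.unusedSectionVars false
set_option linter.unusedVariables false
set_option maxHeartbeats 1000000

namespace Stmt9

open Finset

variable {V : Type*} [Fintype V] [DecidableEq V]

lemma mem_of_reachable {G : SimpleGraph V} {A : Set V}
    (hA : ∀ u ∈ A, ∀ w, G.Adj u w → w ∈ A) :
    ∀ {r w : V}, r ∈ A → G.Reachable r w → w ∈ A := by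
  intro r w hr hw
  obtain ⟨p⟩ := hw
  induction p with
  | nil => exact hr
  | cons h p ih => exact ih (hA _ hr _ h)

lemma exists_crossing {G : SimpleGraph V} {A : Set V} {r w : V} (hr : r ∈ A) (hw : w ∉ A)
    (h : G.Reachable r w) : ∃ u v, u ∈ A ∧ v ∉ A ∧ G.Adj u v := by
  by_contra hc
  push_neg at hc
  exact hw (mem_of_reachable (fun u hu v hadj => by
    by_contra hv
    exact (hc u v hu hv) hadj) hr h)

variable [Fintype V] [DecidableEq V]

lemma exists_neighbor {G : SimpleGraph V} (hconn : G.Connected) (hn : 2 ≤ Fintype.card V)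
    (v : V) : ∃ u, G.Adj v u := by
  obtain ⟨u, hu⟩ := Fintype.exists_ne_of_one_lt_card (by omega) v
  obtain ⟨p⟩ := hconn.preconnected v u
  cases p with
  | nil => exact absurd rfl hu
  | cons h p => exact ⟨_, h⟩

lemma degree_pos {G : SimpleGraph V} (hconn : G.Connected) (hn : 2 ≤ Fintype.card V)
    (v : V) : 0 < G.degree v := by
  rw [G.degree_pos_iff_exists_adj v]
  obtain ⟨u, hu⟩ := Fintype.exists_ne_of_one_lt_card (by omega) v
  obtain ⟨p⟩ := hconn.preconnected v u
  cases p with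
  | nil => exact absurd rfl hu
  | cons h p => exact ⟨_, h⟩

lemma exists_leaf {T : SimpleGraph V} (hT : T.IsTree) (hn : 2 ≤ Fintype.card V) :
    ∃ y z : V, T.Adj y z ∧ ∀ w, T.Adj y w → w = z := by
  have hle : ∃ y, T.degree y = 1 := by
    by_contra hc
    push_neg at hc
    have h2 : ∀ v, 2 ≤ T.degree v := fun v => by
      have h1 := degree_pos hT.isConnected hn v
      have h3 := hc v
      omega
    have hsum := T.sum_degrees_eq_twice_card_edges
    have hcard := hT.card_edgeFinset
    have hge : 2 * Fintype.card V ≤ ∑ v, T.degree v := by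
      calc 2 * Fintype.card V = ∑ _v : V, 2 := by
            simp [Finset.sum_const, Finset.card_univ, mul_comm]
          _ ≤ _ := Finset.sum_le_sum (fun v _ => h2 v)
    omega
  obtain ⟨y, hy⟩ := hle
  obtain ⟨z, hz⟩ := Finset.card_eq_one.1 hy
  refine ⟨y, z, ?_, ?_⟩
  · have : z ∈ T.neighborFinset y := hz ▸ Finset.mem_singleton_self z
    exact (T.mem_neighborFinset y z).1 this
  · intro w hw
    have : w ∈ T.neighborFinset y := (T.mem_neighborFinset y w).2 hw
    rw [hz, Finset.mem_singleton] at this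
    exact this

lemma star_iso {n : ℕ} (T : SimpleGraph (Fin n)) (hn : 1 ≤ n) (c : Fin n)
    (hc : ∀ v, v ≠ c → T.Adj c v) (hl : ∀ u v, u ≠ c → v ≠ c → ¬ T.Adj u v) :
    Nonempty (T ≃g _root_.starGraph (n - 1)) := by
  have hn' : n = n - 1 + 1 := by omega
  set e : Fin n ≃ Fin (n - 1 + 1) := (finCongr hn').trans (Equiv.swap (finCongr hn' c) 0) with he
  have hez : ∀ u, e u = 0 ↔ u = c := by
    intro u
    constructor
    · intro h
      by_contra hne
      have h2 : e c = 0 := by simp [he, Equiv.swap_apply_left]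
      have := e.injective (h.trans h2.symm)
      exact hne this
    · intro h
      subst h
      simp [he, Equiv.swap_apply_left]
  refine ⟨⟨e, ?_⟩⟩
  intro u v
  show (_root_.starGraph (n-1)).Adj (e u) (e v) ↔ T.Adj u v
  rw [_root_.starGraph, SimpleGraph.fromRel_adj]
  constructor
  · rintro ⟨hne, h0 | h0⟩
    · have : u = c := (hez u).1 h0
      subst this
      exact hc v (fun h => hne (by rw [h]))
    · have : v = c := (hez v).1 h0
      subst this
      exact (hc u (fun h => hne (by rw [h]))).symm
  · intro hadj
    have hne : u ≠ v := T.ne_of_adj hadj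
    refine ⟨fun h => hne (e.injective h), ?_⟩
    by_cases hu : u = c
    · exact Or.inl ((hez u).2 hu)
    · by_cases hv : v = c
      · exact Or.inr ((hez v).2 hv)
      · exact absurd hadj (hl u v hu hv)

lemma tree_struct {n : ℕ} (T : SimpleGraph (Fin n)) (hT : T.IsTree) (hn : 3 ≤ n) :
    (∃ y z a b : Fin n, T.Adj y z ∧ T.Adj z a ∧ T.Adj a b ∧
      y ≠ z ∧ y ≠ a ∧ y ≠ b ∧ z ≠ a ∧ z ≠ b ∧ a ≠ b ∧ (∀ w, T.Adj y w → w = z))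
    ∨ Nonempty (T ≃g _root_.starGraph (n - 1)) := by
  obtain ⟨y, z, hyz, hyuniq⟩ := exists_leaf hT (by simp; omega)
  by_cases hb : ∃ a b, T.Adj z a ∧ a ≠ y ∧ T.Adj a b ∧ b ≠ z
  · obtain ⟨a, b, hza, hay, hab, hbz⟩ := hb
    left
    have hya : y ≠ a := fun h => hay h.symm
    have hyb : y ≠ b := by
      rintro rfl
      exact hza.ne (hyuniq a hab.symm).symm
    exact ⟨y, z, a, b, hyz, hza, hab, hyz.ne, hya, hyb, hza.ne, fun h => hbz h.symm, hab.ne, hyuniq⟩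
  · push_neg at hb
    right
    have hA : ∀ u ∈ ({w | w = z ∨ T.Adj z w} : Set (Fin n)), ∀ w, T.Adj u w →
        w ∈ ({w | w = z ∨ T.Adj z w} : Set (Fin n)) := by
      rintro u (rfl | hu) w hw
      · exact Or.inr hw
      · by_cases huy : u = y
        · subst huy
          exact Or.inl (hyuniq w hw)
        · exact Or.inl (hb u w hu huy hw)
    have hall : ∀ w : Fin n, w = z ∨ T.Adj z w := by
      intro w
      have := mem_of_reachable hA (Or.inl rfl : z ∈ ({w | w = z ∨ T.Adj z w} : Set (Fin n)))
        (hT.isConnected.preconnected z w)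
      exact this
    refine star_iso T (by omega) z (fun v hv => (hall v).resolve_left hv) ?_
    intro u v hu hv hadj
    have hzu : T.Adj z u := (hall u).resolve_left hu
    by_cases huy : u = y
    · subst huy
      exact hv (hyuniq v hadj)
    · exact hv (hb u v hzu huy hadj)

lemma enum_lemma {n : ℕ} (T : SimpleGraph (Fin n)) (hT : T.IsTree) (hn : 4 ≤ n)
    {y z a b : Fin n} (hyz : T.Adj y z) (hza : T.Adj z a) (hab : T.Adj a b)
    (hd2 : y ≠ a) (hd3 : y ≠ b) (hd4 : z ≠ a) (hd5 : z ≠ b) (hd6 : a ≠ b)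
    (hyuniq : ∀ w, T.Adj y w → w = z) :
    ∃ (v : ℕ → Fin n) (par : ℕ → ℕ),
      v 0 = z ∧ v 1 = a ∧ v 2 = b ∧ v (n-1) = y ∧
      (∀ i j, i < n → j < n → v i = v j → i = j) ∧
      (∀ u : Fin n, ∃ i, i < n ∧ v i = u) ∧
      par 1 = 0 ∧ par 2 = 1 ∧ par (n-1) = 0 ∧
      (∀ i, 1 ≤ i → i < n → par i < i ∧ T.Adj (v (par i)) (v i)) ∧
      (∀ i j, i < n → j < n → T.Adj (v i) (v j) →
        (1 ≤ j ∧ i = par j) ∨ (1 ≤ i ∧ j = par i)) := by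
  have hd1 : y ≠ z := hyz.ne
  -- the graph T with y removed
  set T' : SimpleGraph (Fin n) :=
    { Adj := fun u w => u ≠ y ∧ w ≠ y ∧ T.Adj u w
      symm := ⟨fun u w h => ⟨h.2.1, h.1, h.2.2.symm⟩⟩
      loopless := ⟨fun u h => T.irrefl h.2.2⟩ } with hT'
  have hT'adj : ∀ {u w}, T'.Adj u w ↔ (u ≠ y ∧ w ≠ y ∧ T.Adj u w) := by
    intro u w; rw [hT']
  -- reachability in T' from z to every vertex except y
  have hreach : ∀ w : Fin n, w ≠ y → T'.Reachable z w := by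
    have hA : ∀ u ∈ ({w | w = y ∨ (w ≠ y ∧ T'.Reachable z w)} : Set (Fin n)), ∀ w, T.Adj u w →
        w ∈ ({w | w = y ∨ (w ≠ y ∧ T'.Reachable z w)} : Set (Fin n)) := by
      rintro u (rfl | ⟨huy, hur⟩) w hw
      · have hwz : w = z := hyuniq w hw
        rw [Set.mem_setOf_eq, hwz]
        exact Or.inr ⟨hd1.symm, Reachable.refl z⟩
      · by_cases hwy : w = y
        · exact Or.inl hwy
        · exact Or.inr ⟨hwy, hur.trans (Adj.reachable (hT'adj.2 ⟨huy, hwy, hw⟩))⟩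
    intro w hwy
    have hz : z ∈ ({w | w = y ∨ (w ≠ y ∧ T'.Reachable z w)} : Set (Fin n)) :=
      Or.inr ⟨hd1.symm, Reachable.refl z⟩
    have := mem_of_reachable hA hz (hT.isConnected.preconnected z w)
    rcases this with h | h
    · exact absurd h hwy
    · exact h.2
  -- growth
  have hgrow : ∀ s, 3 ≤ s → s ≤ n - 1 → ∃ (v : ℕ → Fin n) (par : ℕ → ℕ),
      v 0 = z ∧ v 1 = a ∧ v 2 = b ∧
      (∀ i j, i < s → j < s → v i = v j → i = j) ∧
      (∀ i, i < s → v i ≠ y) ∧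
      par 1 = 0 ∧ par 2 = 1 ∧
      (∀ i, 1 ≤ i → i < s → par i < i ∧ T'.Adj (v (par i)) (v i)) := by
    intro s hs3 hsn
    induction s with
    | zero => omega
    | succ s ih =>
      by_cases hs : s < 3
      · -- s + 1 = 3
        have hs3' : s = 2 := by omega
        subst hs3'
        refine ⟨fun i => if i = 0 then z else if i = 1 then a else b,
          fun i => if i = 2 then 1 else 0,
          by norm_num, by norm_num, by norm_num, ?_, ?_, by norm_num, by norm_num, ?_⟩
        · intro i j hi hj hij
          interval_cases i <;> interval_cases j <;> simp_all
        · intro i hi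
          interval_cases i <;> simp_all [hd1.symm, Ne.symm hd2, Ne.symm hd3]
        · intro i h1 hi
          interval_cases i
          · refine ⟨by norm_num, ?_⟩
            norm_num
            exact hT'adj.2 ⟨hd1.symm, Ne.symm hd2, hza⟩
          · refine ⟨by norm_num, ?_⟩
            norm_num
            exact hT'adj.2 ⟨Ne.symm hd2, Ne.symm hd3, hab⟩
      · -- extend from s to s+1
        obtain ⟨v, par, h0, h1, h2, hinj, hny, hp1, hp2, hpar⟩ := ih (by omega) (by omega)
        -- find a fresh vertex outside the image and ≠ y
        have hex : ∃ w₀ : Fin n, w₀ ∉ ({w | ∃ i, i < s ∧ v i = w} : Set (Fin n)) ∧ w₀ ≠ y := by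
          by_contra hc
          push_neg at hc
          have hsub : (Finset.univ : Finset (Fin n)) ⊆
              insert y ((Finset.range s).image v) := by
            intro w _
            by_cases hwy : w = y
            · exact Finset.mem_insert.2 (Or.inl hwy)
            · have hwA : w ∈ ({w | ∃ i, i < s ∧ v i = w} : Set (Fin n)) := by
                by_contra h
                exact hwy (hc w h)
              obtain ⟨i, hi, hvi⟩ := hwA
              exact Finset.mem_insert.2 (Or.inr (Finset.mem_image.2 ⟨i, Finset.mem_range.2 hi, hvi⟩))
          have hcard := Finset.card_le_card hsub
          have h1' : (insert y ((Finset.range s).image v)).card ≤ s + 1 := by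
            calc (insert y ((Finset.range s).image v)).card
                ≤ ((Finset.range s).image v).card + 1 := Finset.card_insert_le _ _
              _ ≤ s + 1 := by
                  have := Finset.card_image_le (s := Finset.range s) (f := v)
                  simp at this
                  omega
          simp at hcard
          omega
        obtain ⟨w₀, hw₀, hw₀y⟩ := hex
        have hzA : z ∈ ({w | ∃ i, i < s ∧ v i = w} : Set (Fin n)) := ⟨0, by omega, h0⟩
        obtain ⟨u, w, huA, hwA, huw⟩ := exists_crossing hzA hw₀ (hreach w₀ hw₀y)
        obtain ⟨i₀, hi₀, hvi₀⟩ := huA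
        refine ⟨Function.update v s w, Function.update par s i₀, ?_, ?_, ?_, ?_, ?_, ?_, ?_, ?_⟩
        · rw [Function.update_of_ne (by omega)]; exact h0
        · rw [Function.update_of_ne (by omega)]; exact h1
        · rw [Function.update_of_ne (by omega)]; exact h2
        · intro i j hi hj hij
          by_cases his : i = s <;> by_cases hjs : j = s
          · omega
          · subst his
            rw [Function.update_self, Function.update_of_ne hjs] at hij
            exact absurd ⟨j, by omega, hij.symm⟩ hwA
          · subst hjs
            rw [Function.update_self, Function.update_of_ne his] at hij
            exact absurd ⟨i, by omega, hij⟩ hwA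
          · rw [Function.update_of_ne his, Function.update_of_ne hjs] at hij
            exact hinj i j (by omega) (by omega) hij
        · intro i hi
          by_cases his : i = s
          · subst his
            rw [Function.update_self]
            exact (hT'adj.1 huw).2.1
          · rw [Function.update_of_ne his]
            exact hny i (by omega)
        · rw [Function.update_of_ne (by omega)]; exact hp1
        · rw [Function.update_of_ne (by omega)]; exact hp2
        · intro i hi1 his
          by_cases his' : i = s
          · subst his'
            rw [Function.update_self, Function.update_of_ne (by omega : i₀ ≠ i),
              Function.update_self]
            exact ⟨hi₀, hvi₀ ▸ huw⟩
          · have hil : i < s := by omega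
            obtain ⟨hp, ha⟩ := hpar i hi1 hil
            rw [Function.update_of_ne his', Function.update_of_ne (by omega : par i ≠ s),
              Function.update_of_ne his']
            exact ⟨hp, ha⟩
  obtain ⟨v, par, h0, h1, h2, hinj, hny, hp1, hp2, hpar⟩ := hgrow (n-1) (by omega) le_rfl
  set v' := Function.update v (n-1) y with hv'def
  set par' := Function.update par (n-1) 0 with hpar'def
  have hv'lt : ∀ i, i < n - 1 → v' i = v i := fun i hi => Function.update_of_ne (by omega) _ _
  have hv'last : v' (n-1) = y := Function.update_self _ _ _
  have hinj' : ∀ i j, i < n → j < n → v' i = v' j → i = j := by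
    intro i j hi hj hij
    by_cases his : i = n-1 <;> by_cases hjs : j = n-1
    · omega
    · subst his
      rw [hv'last, hv'lt j (by omega)] at hij
      exact absurd hij.symm (hny j (by omega))
    · subst hjs
      rw [hv'last, hv'lt i (by omega)] at hij
      exact absurd hij (hny i (by omega))
    · rw [hv'lt i (by omega), hv'lt j (by omega)] at hij
      exact hinj i j (by omega) (by omega) hij
  have hsurj : ∀ u : Fin n, ∃ i, i < n ∧ v' i = u := by
    have hgi : Function.Injective (fun i : Fin n => v' i.val) := by
      intro i j hij
      exact Fin.ext (hinj' i.val j.val i.isLt j.isLt hij)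
    have hgs := (Finite.injective_iff_surjective).1 hgi
    intro u
    obtain ⟨i, hi⟩ := hgs u
    exact ⟨i.val, i.isLt, hi⟩
  have hpar'eval : ∀ i, 1 ≤ i → i < n → par' i < i ∧ T.Adj (v' (par' i)) (v' i) := by
    intro i h1i hi
    by_cases his : i = n - 1
    · subst his
      constructor
      · rw [hpar'def, Function.update_self]
        omega
      · rw [hpar'def, Function.update_self, hv'lt 0 (by omega), h0, hv'last]
        exact hyz.symm
    · have hil : i < n - 1 := by omega
      obtain ⟨hlt, hadj⟩ := hpar i h1i hil
      have hpp : par' i = par i := Function.update_of_ne his _ _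
      rw [hpp, hv'lt i hil, hv'lt (par i) (by omega)]
      exact ⟨hlt, (hT'adj.1 hadj).2.2⟩
  have hedge : ∀ i j, i < n → j < n → T.Adj (v' i) (v' j) →
      (1 ≤ j ∧ i = par' j) ∨ (1 ≤ i ∧ j = par' i) := by
    set E : Finset (Sym2 (Fin n)) := (Finset.Ico 1 n).image (fun i => s(v' (par' i), v' i))
      with hE
    have hEinj : Set.InjOn (fun i => s(v' (par' i), v' i)) ↑(Finset.Ico 1 n) := by
      intro i hi j hj hij
      simp only [Finset.coe_Ico, Set.mem_Ico] at hi hj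
      have hpi := hpar'eval i hi.1 hi.2
      have hpj := hpar'eval j hj.1 hj.2
      simp only [Sym2.eq_iff] at hij
      rcases hij with ⟨hac, hbd⟩ | ⟨had, hbc⟩
      · exact hinj' i j hi.2 hj.2 hbd
      · have e1 := hinj' (par' i) j (by omega) hj.2 had
        have e2 := hinj' i (par' j) hi.2 (by omega) hbc
        omega
    have hEsub : E ⊆ T.edgeFinset := by
      intro e he
      rw [hE] at he
      obtain ⟨i, hi, rfl⟩ := Finset.mem_image.1 he
      rw [Finset.mem_Ico] at hi
      rw [SimpleGraph.mem_edgeFinset]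
      exact (hpar'eval i hi.1 hi.2).2
    have hEcard : E.card = n - 1 := by
      rw [hE, Finset.card_image_of_injOn hEinj, Nat.card_Ico]
    have hTcard : T.edgeFinset.card = n - 1 := by
      have := hT.card_edgeFinset
      simp only [Fintype.card_fin] at this
      omega
    have hEeq : E = T.edgeFinset := Finset.eq_of_subset_of_card_le hEsub (by omega)
    intro i j hi hj hadj
    have hmem : s(v' i, v' j) ∈ T.edgeFinset := SimpleGraph.mem_edgeFinset.2 hadj
    rw [← hEeq, hE] at hmem
    obtain ⟨i₀, hi₀, heq⟩ := Finset.mem_image.1 hmem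
    rw [Finset.mem_Ico] at hi₀
    have hp₀ := hpar'eval i₀ hi₀.1 hi₀.2
    simp only [Sym2.eq_iff] at heq
    rcases heq with ⟨hac, hbd⟩ | ⟨had, hbc⟩
    · have e1 := hinj' (par' i₀) i (by omega) hi hac
      have e2 := hinj' i₀ j hi₀.2 hj hbd
      subst e2
      exact Or.inl ⟨hi₀.1, e1.symm⟩
    · have e1 := hinj' (par' i₀) j (by omega) hj had
      have e2 := hinj' i₀ i hi₀.2 hi hbc
      subst e2
      exact Or.inr ⟨hi₀.1, e1.symm⟩
  refine ⟨v', par', ?_, ?_, ?_, hv'last, hinj', hsurj, ?_, ?_, ?_, hpar'eval, hedge⟩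
  · rw [hv'lt 0 (by omega)]; exact h0
  · rw [hv'lt 1 (by omega)]; exact h1
  · rw [hv'lt 2 (by omega)]; exact h2
  · rw [hpar'def, Function.update_of_ne (by omega)]; exact hp1
  · rw [hpar'def, Function.update_of_ne (by omega)]; exact hp2
  · rw [hpar'def, Function.update_self]

noncomputable def nbrs (G : SimpleGraph V) (v : V) : Finset V :=
  Finset.univ.filter (fun u => G.Adj v u)

lemma mem_nbrs {G : SimpleGraph V} {v u : V} : u ∈ nbrs G v ↔ G.Adj v u := by
  simp [nbrs]

noncomputable def fdeg (G : SimpleGraph V) (v : V) : ℕ := (nbrs G v).card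

lemma greedy_embed {n : ℕ} {T : SimpleGraph (Fin n)} (hn : 4 ≤ n)
    {v : ℕ → Fin n} {par : ℕ → ℕ}
    (hinj : ∀ i j, i < n → j < n → v i = v j → i = j)
    (hsurj : ∀ u : Fin n, ∃ i, i < n ∧ v i = u)
    (hp1 : par 1 = 0) (hp2 : par 2 = 1) (hplast : par (n-1) = 0)
    (hpar : ∀ i, 1 ≤ i → i < n → par i < i)
    (hedge : ∀ i j, i < n → j < n → T.Adj (v i) (v j) →
      (1 ≤ j ∧ i = par j) ∨ (1 ≤ i ∧ j = par i))
    {G : SimpleGraph V} (hdeg : ∀ w : V, n - 2 ≤ fdeg G w)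
    {r x x' : V} (hrx : G.Adj r x) (hxx' : G.Adj x x') (hx'r : x' ≠ r)
    (hlast : n - 1 ≤ fdeg G r ∨ ¬ G.Adj r x') :
    Copies T G := by
  have hgrow : ∀ s, 3 ≤ s → s ≤ n - 1 → ∃ g : ℕ → V,
      g 0 = r ∧ g 1 = x ∧ g 2 = x' ∧
      (∀ i j, i < s → j < s → g i = g j → i = j) ∧
      (∀ i, 1 ≤ i → i < s → G.Adj (g (par i)) (g i)) := by
    intro s hs3 hsn
    induction s with
    | zero => omega
    | succ s ih =>
      by_cases hs : s < 3
      · have hs2 : s = 2 := by omega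
        subst hs2
        refine ⟨fun i => if i = 0 then r else if i = 1 then x else x',
          by norm_num, by norm_num, by norm_num, ?_, ?_⟩
        · intro i j hi hj hij
          interval_cases i <;> interval_cases j <;>
            simp_all [G.ne_of_adj hrx, G.ne_of_adj hxx', hx'r, (G.ne_of_adj hrx).symm,
              (G.ne_of_adj hxx').symm, hx'r.symm]
        · intro i h1 hi
          interval_cases i
          · rw [hp1]; norm_num; exact hrx
          · rw [hp2]; norm_num; exact hxx'
      · obtain ⟨g, h0, h1, h2, ginj, gadj⟩ := ih (by omega) (by omega)
        have hps : par s < s := hpar s (by omega) (by omega)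
        have hpick : ∃ w, w ∈ nbrs G (g (par s)) \ ((Finset.range s).image g) := by
          have hsub : nbrs G (g (par s)) ∩ ((Finset.range s).image g) ⊆
              ((Finset.range s).image g).erase (g (par s)) := by
            intro w hw
            rw [Finset.mem_inter] at hw
            refine Finset.mem_erase.2 ⟨?_, hw.2⟩
            intro hwe
            exact G.irrefl (hwe ▸ mem_nbrs.1 hw.1)
          have hc1 : (((Finset.range s).image g).erase (g (par s))).card ≤ s - 1 := by
            have hmem : g (par s) ∈ (Finset.range s).image g :=
              Finset.mem_image.2 ⟨par s, Finset.mem_range.2 hps, rfl⟩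
            rw [Finset.card_erase_of_mem hmem]
            have := Finset.card_image_le (s := Finset.range s) (f := g)
            simp only [Finset.card_range] at this
            omega
          have hc2 := Finset.card_le_card hsub
          have hc3 := Finset.card_sdiff_add_card_inter (nbrs G (g (par s)))
            ((Finset.range s).image g)
          have hdeg' : n - 2 ≤ (nbrs G (g (par s))).card := hdeg (g (par s))
          have : 0 < (nbrs G (g (par s)) \ ((Finset.range s).image g)).card := by
            omega
          obtain ⟨w, hw⟩ := Finset.card_pos.1 this
          exact ⟨w, hw⟩
        obtain ⟨w, hw⟩ := hpick
        rw [Finset.mem_sdiff, mem_nbrs] at hw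
        refine ⟨Function.update g s w, ?_, ?_, ?_, ?_, ?_⟩
        · rw [Function.update_of_ne (by omega)]; exact h0
        · rw [Function.update_of_ne (by omega)]; exact h1
        · rw [Function.update_of_ne (by omega)]; exact h2
        · intro i j hi hj hij
          by_cases his : i = s <;> by_cases hjs : j = s
          · omega
          · subst his
            rw [Function.update_self, Function.update_of_ne hjs] at hij
            exact absurd (Finset.mem_image.2 ⟨j, Finset.mem_range.2 (by omega), hij.symm⟩) hw.2
          · subst hjs
            rw [Function.update_self, Function.update_of_ne his] at hij
            exact absurd (Finset.mem_image.2 ⟨i, Finset.mem_range.2 (by omega), hij⟩) hw.2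
          · rw [Function.update_of_ne his, Function.update_of_ne hjs] at hij
            exact ginj i j (by omega) (by omega) hij
        · intro i h1i hi
          by_cases his : i = s
          · subst his
            rw [Function.update_self, Function.update_of_ne (by omega : par i ≠ i)]
            exact hw.1
          · have hpi := hpar i h1i (by omega)
            rw [Function.update_of_ne his, Function.update_of_ne (by omega : par i ≠ s)]
            exact gadj i h1i (by omega)
  -- last step
  obtain ⟨g, h0, h1, h2, ginj, gadj⟩ := hgrow (n-1) (by omega) le_rfl
  have hpicklast : ∃ w, w ∈ nbrs G r \ ((Finset.range (n-1)).image g) := by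
    have hrmem : r ∈ (Finset.range (n-1)).image g :=
      Finset.mem_image.2 ⟨0, Finset.mem_range.2 (by omega), h0⟩
    have hcard_im : ((Finset.range (n-1)).image g).card ≤ n - 1 := by
      have := Finset.card_image_le (s := Finset.range (n-1)) (f := g)
      simp only [Finset.card_range] at this
      omega
    have hc3 := Finset.card_sdiff_add_card_inter (nbrs G r)
      ((Finset.range (n-1)).image g)
    rcases hlast with hbig | hnadj
    · have hsub : nbrs G r ∩ ((Finset.range (n-1)).image g) ⊆
          ((Finset.range (n-1)).image g).erase r := by
        intro w hw
        rw [Finset.mem_inter] at hw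
        refine Finset.mem_erase.2 ⟨?_, hw.2⟩
        intro hwe
        exact G.irrefl (hwe ▸ mem_nbrs.1 hw.1)
      have hc1 : (((Finset.range (n-1)).image g).erase r).card ≤ n - 2 := by
        rw [Finset.card_erase_of_mem hrmem]; omega
      have hc2 := Finset.card_le_card hsub
      have hdeg' : n - 1 ≤ (nbrs G r).card := hbig
      have : 0 < (nbrs G r \ ((Finset.range (n-1)).image g)).card := by omega
      obtain ⟨w, hw⟩ := Finset.card_pos.1 this
      exact ⟨w, hw⟩
    · have hx'mem : x' ∈ (Finset.range (n-1)).image g :=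
        Finset.mem_image.2 ⟨2, Finset.mem_range.2 (by omega), h2⟩
      have hsub : nbrs G r ∩ ((Finset.range (n-1)).image g) ⊆
          (((Finset.range (n-1)).image g).erase r).erase x' := by
        intro w hw
        rw [Finset.mem_inter] at hw
        have hwr : w ≠ r := by
          intro hwe
          exact G.irrefl (hwe ▸ mem_nbrs.1 hw.1)
        have hwx' : w ≠ x' := by
          intro hwe
          exact hnadj (hwe ▸ mem_nbrs.1 hw.1)
        exact Finset.mem_erase.2 ⟨hwx', Finset.mem_erase.2 ⟨hwr, hw.2⟩⟩
      have hc1 : ((((Finset.range (n-1)).image g).erase r).erase x').card ≤ n - 3 := by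
        rw [Finset.card_erase_of_mem (Finset.mem_erase.2 ⟨hx'r, hx'mem⟩),
          Finset.card_erase_of_mem hrmem]
        omega
      have hc2 := Finset.card_le_card hsub
      have hdeg' : n - 2 ≤ (nbrs G r).card := hdeg r
      have : 0 < (nbrs G r \ ((Finset.range (n-1)).image g)).card := by omega
      obtain ⟨w, hw⟩ := Finset.card_pos.1 this
      exact ⟨w, hw⟩
  obtain ⟨w, hw⟩ := hpicklast
  rw [Finset.mem_sdiff, mem_nbrs] at hw
  set g' : ℕ → V := Function.update g (n-1) w with hg'
  have hg'lt : ∀ i, i < n - 1 → g' i = g i := fun i hi => Function.update_of_ne (by omega) _ _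
  have hg'last : g' (n-1) = w := Function.update_self _ _ _
  have ginj' : ∀ i j, i < n → j < n → g' i = g' j → i = j := by
    intro i j hi hj hij
    by_cases his : i = n-1 <;> by_cases hjs : j = n-1
    · omega
    · subst his
      rw [hg'last, hg'lt j (by omega)] at hij
      exact absurd (Finset.mem_image.2 ⟨j, Finset.mem_range.2 (by omega), hij.symm⟩) hw.2
    · subst hjs
      rw [hg'last, hg'lt i (by omega)] at hij
      exact absurd (Finset.mem_image.2 ⟨i, Finset.mem_range.2 (by omega), hij⟩) hw.2
    · rw [hg'lt i (by omega), hg'lt j (by omega)] at hij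
      exact ginj i j (by omega) (by omega) hij
  have gadj' : ∀ i, 1 ≤ i → i < n → G.Adj (g' (par i)) (g' i) := by
    intro i h1i hi
    by_cases his : i = n-1
    · subst his
      rw [hg'last, hplast, hg'lt 0 (by omega), h0]
      exact hw.1
    · have hil : i < n - 1 := by omega
      have hpi := hpar i h1i hi
      rw [hg'lt i hil, hg'lt (par i) (by omega)]
      exact gadj i h1i hil
  choose idx hidxlt hidxv using hsurj
  refine ⟨fun u => g' (idx u), ?_, ?_⟩
  · intro u u' huu
    have := ginj' (idx u) (idx u') (hidxlt u) (hidxlt u') huu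
    rw [← hidxv u, ← hidxv u', this]
  · intro u u' hadj
    have hT := hedge (idx u) (idx u') (hidxlt u) (hidxlt u') (by rw [hidxv u, hidxv u']; exact hadj)
    rcases hT with ⟨h1j, hca⟩ | ⟨h1i, hca⟩
    · show G.Adj (g' (idx u)) (g' (idx u'))
      rw [hca]
      exact gadj' (idx u') h1j (hidxlt u')
    · show G.Adj (g' (idx u)) (g' (idx u'))
      rw [hca]
      exact (gadj' (idx u) h1i (hidxlt u)).symm

lemma lemma_B {n : ℕ} (T : SimpleGraph (Fin n)) (hT : T.IsTree) (hn : 4 ≤ n)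
    (hstar : ¬ Nonempty (T ≃g _root_.starGraph (n - 1)))
    {G : SimpleGraph V} (hdeg : ∀ w : V, n - 2 ≤ fdeg G w)
    {r₀ : V} (hcomp : n ≤ (Finset.univ.filter (fun u => G.Reachable r₀ u)).card) :
    Copies T G := by
  obtain ⟨y, z, a, b, hyz, hza, hab, hd1, hd2, hd3, hd4, hd5, hd6, hyuniq⟩ :=
    (tree_struct T hT (by omega)).resolve_right hstar
  obtain ⟨v, par, h0, h1, h2, h3, hinj, hsurj, hp1, hp2, hpl, hpar, hedge⟩ :=
    enum_lemma T hT hn hyz hza hab hd2 hd3 hd4 hd5 hd6 hyuniq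
  by_cases hbig : ∃ bb : V, n - 1 ≤ fdeg G bb
  · obtain ⟨bb, hbb⟩ := hbig
    have hx : ∃ x, G.Adj bb x := by
      have hpos : 0 < (nbrs G bb).card := by
        have : n - 1 ≤ (nbrs G bb).card := hbb
        omega
      obtain ⟨x, hx⟩ := Finset.card_pos.1 hpos
      exact ⟨x, mem_nbrs.1 hx⟩
    obtain ⟨x, hx⟩ := hx
    have hx' : ∃ x', G.Adj x x' ∧ x' ≠ bb := by
      have hdx : 1 < (nbrs G x).card := by
        have : n - 2 ≤ (nbrs G x).card := hdeg x
        omega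
      obtain ⟨x', hx'mem, hx'ne⟩ := Finset.exists_mem_ne hdx bb
      exact ⟨x', mem_nbrs.1 hx'mem, hx'ne⟩
    obtain ⟨x', hxx', hx'bb⟩ := hx'
    exact greedy_embed hn hinj hsurj hp1 hp2 hpl (fun i hi1 hi2 => (hpar i hi1 hi2).1) hedge
      hdeg hx hxx' hx'bb (Or.inl hbb)
  · push_neg at hbig
    have hA : ∃ u w, u ∈ (insert r₀ (nbrs G r₀) : Finset V) ∧
        w ∉ (insert r₀ (nbrs G r₀) : Finset V) ∧ G.Adj u w := by
      by_contra hc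
      push_neg at hc
      have hclosed : ∀ u ∈ (↑(insert r₀ (nbrs G r₀) : Finset V) : Set V), ∀ w,
          G.Adj u w → w ∈ (↑(insert r₀ (nbrs G r₀) : Finset V) : Set V) := by
        intro u hu w hw
        simp only [Finset.coe_insert, Set.mem_insert_iff, Finset.mem_coe] at hu ⊢
        by_contra hwn
        have hwn' : w ∉ (insert r₀ (nbrs G r₀) : Finset V) := by
          simp only [Finset.mem_insert]
          tauto
        exact (hc u w (by simp only [Finset.mem_insert]; tauto) hwn') hw
      have hsub : (Finset.univ.filter (fun u => G.Reachable r₀ u)) ⊆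
          insert r₀ (nbrs G r₀) := by
        intro w hw
        rw [Finset.mem_filter] at hw
        have := mem_of_reachable hclosed (by simp : r₀ ∈ _) hw.2
        exact this
      have hc1 := Finset.card_le_card hsub
      have hc2 : (insert r₀ (nbrs G r₀)).card ≤ n - 1 := by
        calc (insert r₀ (nbrs G r₀)).card ≤ (nbrs G r₀).card + 1 :=
              Finset.card_insert_le _ _
          _ ≤ n - 1 := by
              have h1 : fdeg G r₀ < n - 1 := hbig r₀
              have h2 : n - 2 ≤ fdeg G r₀ := hdeg r₀
              have h3 : fdeg G r₀ = (nbrs G r₀).card := rfl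
              omega
      omega
    obtain ⟨u, w, hu, hw, huw⟩ := hA
    have hur : u ≠ r₀ := by
      rintro rfl
      exact hw (Finset.mem_insert.2 (Or.inr (mem_nbrs.2 huw)))
    have hru : G.Adj r₀ u := by
      rcases Finset.mem_insert.1 hu with h | h
      · exact absurd h hur
      · exact mem_nbrs.1 h
    have hwr : w ≠ r₀ := fun h => hw (h ▸ Finset.mem_insert_self _ _)
    have hnadj : ¬ G.Adj r₀ w := fun h =>
      hw (Finset.mem_insert.2 (Or.inr (mem_nbrs.2 h)))
    exact greedy_embed hn hinj hsurj hp1 hp2 hpl (fun i hi1 hi2 => (hpar i hi1 hi2).1) hedge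
      hdeg hru huw hwr (Or.inr hnadj)

lemma lemma_KEY {n : ℕ} (T : SimpleGraph (Fin n)) (hT : T.IsTree) (hn : 4 ≤ n)
    (hstar : ¬ Nonempty (T ≃g _root_.starGraph (n - 1)))
    {G : SimpleGraph V} (hdeg : ∀ w : V, n - 2 ≤ fdeg G w)
    (hnoT : ¬ Copies T G) :
    (n - 1) ∣ Fintype.card V := by
  have hfib : ∀ r₀ : V, (Finset.univ.filter (fun u => G.Reachable r₀ u)).card = n - 1 := by
    intro r₀
    have hub : (Finset.univ.filter (fun u => G.Reachable r₀ u)).card ≤ n - 1 := by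
      by_contra h
      exact hnoT (lemma_B T hT hn hstar hdeg (r₀ := r₀) (by omega))
    have hlb : n - 1 ≤ (Finset.univ.filter (fun u => G.Reachable r₀ u)).card := by
      have hsub : insert r₀ (nbrs G r₀) ⊆
          Finset.univ.filter (fun u => G.Reachable r₀ u) := by
        intro w hw
        rw [Finset.mem_filter]
        refine ⟨Finset.mem_univ _, ?_⟩
        rcases Finset.mem_insert.1 hw with h | h
        · exact h ▸ Reachable.refl _
        · exact (mem_nbrs.1 h).reachable
      have hc1 := Finset.card_le_card hsub
      have hc2 : (insert r₀ (nbrs G r₀)).card = fdeg G r₀ + 1 := by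
        rw [Finset.card_insert_of_notMem (by
          rw [mem_nbrs]
          exact G.irrefl)]
        rfl
      have := hdeg r₀
      omega
    omega
  haveI : Fintype G.ConnectedComponent :=
    Fintype.ofSurjective G.connectedComponentMk (fun Q => Q.exists_rep)
  have hsum := Finset.card_eq_sum_card_fiberwise
    (f := fun v : V => G.connectedComponentMk v) (s := Finset.univ) (t := Finset.univ)
    (fun x _ => Finset.mem_univ _)
  rw [Finset.card_univ] at hsum
  have hfib' : ∀ Q : G.ConnectedComponent,
      (Finset.univ.filter (fun v => G.connectedComponentMk v = Q)).card = n - 1 := by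
    intro Q
    obtain ⟨r₀, rfl⟩ := Q.exists_rep
    rw [← hfib r₀]
    congr 1
    apply Finset.filter_congr
    intro x _
    show G.connectedComponentMk x = G.connectedComponentMk r₀ ↔ _
    rw [SimpleGraph.ConnectedComponent.eq]
    exact ⟨fun h => h.symm, fun h => h.symm⟩
  rw [hsum]
  have : ∑ Q : G.ConnectedComponent,
      (Finset.univ.filter (fun v => G.connectedComponentMk v = Q)).card
      = (Finset.univ : Finset G.ConnectedComponent).card * (n - 1) := by
    rw [Finset.sum_congr rfl (fun Q _ => hfib' Q), Finset.sum_const, smul_eq_mul]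
  rw [this]
  exact Dvd.dvd.mul_left dvd_rfl _

lemma star_bound {N ℓ : ℕ} {c : Fin N → Fin N → Fin 3}
    (hnostar : ¬ Copies (_root_.starGraph ℓ) (colorGraph c 0)) (hl : 1 ≤ ℓ)
    (v : Fin N) (S : Finset (Fin N)) (hv : v ∉ S) :
    (S.filter (fun u => c v u = 0)).card ≤ ℓ - 1 := by
  by_contra h
  push_neg at h
  obtain ⟨U, hUsub, hUcard⟩ := Finset.exists_subset_card_eq
    (s := S.filter (fun u => c v u = 0)) (n := ℓ) (by omega)
  set eo := U.orderIsoOfFin hUcard with heo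
  refine hnostar ⟨Fin.cons v (fun i => (eo i : Fin N)), ?_, ?_⟩
  · intro i j hij
    induction i using Fin.cases <;> induction j using Fin.cases
    · rfl
    · rw [Fin.cons_zero, Fin.cons_succ] at hij
      exact absurd ((Finset.mem_filter.1 (hUsub (eo _).2)).1) (hij ▸ hv)
    · rw [Fin.cons_zero, Fin.cons_succ] at hij
      exact absurd ((Finset.mem_filter.1 (hUsub (eo _).2)).1) (hij.symm ▸ hv)
    · rw [Fin.cons_succ, Fin.cons_succ] at hij
      congr 1
      exact eo.injective (Subtype.ext hij)
  · intro a b hab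
    rw [_root_.starGraph, SimpleGraph.fromRel_adj] at hab
    obtain ⟨hne, h0 | h0⟩ := hab
    · subst h0
      have hb : b ≠ 0 := fun hb => hne hb.symm
      obtain ⟨i, rfl⟩ := Fin.exists_succ_eq.2 hb
      rw [colorGraph, SimpleGraph.fromRel_adj, Fin.cons_zero, Fin.cons_succ]
      have hmem := Finset.mem_filter.1 (hUsub (eo i).2)
      exact ⟨fun hh => hv (hh ▸ hmem.1), Or.inl hmem.2⟩
    · subst h0
      have ha : a ≠ 0 := hne
      obtain ⟨i, rfl⟩ := Fin.exists_succ_eq.2 ha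
      rw [colorGraph, SimpleGraph.fromRel_adj, Fin.cons_zero, Fin.cons_succ]
      have hmem := Finset.mem_filter.1 (hUsub (eo i).2)
      exact ⟨fun hh => hv (hh.symm ▸ hmem.1), Or.inr hmem.2⟩

lemma main_upper {N n ℓ k : ℕ} {T : SimpleGraph (Fin n)} (hT : T.IsTree) (hn : 4 ≤ n)
    (hl : 2 ≤ ℓ) (hk : k = ℓ + n - 3) (hkd : (n - 1) ∣ k)
    (hstar : ¬ Nonempty (T ≃g _root_.starGraph (n - 1)))
    {c : Fin N → Fin N → Fin 3} (hsym : ∀ a b, c a b = c b a)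
    (hnostar : ¬ Copies (_root_.starGraph ℓ) (colorGraph c 0))
    (hnoT : ¬ Copies T (colorGraph c 1)) :
    ∀ (j : ℕ) (S : Finset (Fin N)), k * j + 1 ≤ S.card →
      ∃ g : Fin (j+1) → Fin N, Function.Injective g ∧ (∀ i, g i ∈ S) ∧
        (∀ i1 i2, i1 ≠ i2 → c (g i1) (g i2) = 2) := by
  intro j
  induction j with
  | zero =>
    intro S hS
    have hpos : 0 < S.card := by omega
    obtain ⟨v, hv⟩ := Finset.card_pos.1 hpos
    exact ⟨fun _ => v, fun a b _ => Fin.ext (by omega), fun _ => hv,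
      fun i1 i2 h => absurd (Fin.ext (by omega) : i1 = i2) h⟩
  | succ j ih =>
    intro S hS
    obtain ⟨S', hS'sub, hS'card⟩ := Finset.exists_subset_card_eq (s := S) (n := k*(j+1)+1) hS
    by_cases hbr : ∃ v ∈ S', k*j + 1 ≤ ((S'.erase v).filter (fun u => c v u = 2)).card
    · obtain ⟨v, hv, hcard⟩ := hbr
      obtain ⟨g, hginj, hgmem, hgadj⟩ := ih _ hcard
      have hgv : ∀ i, g i ≠ v := fun i hh =>
        Finset.notMem_erase v S' (Finset.mem_of_mem_filter _ (hh ▸ hgmem i))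
      have hgc : ∀ i, c v (g i) = 2 := fun i =>
        (Finset.mem_filter.1 (hgmem i)).2
      refine ⟨Fin.cons v g, ?_, ?_, ?_⟩
      · intro i1 i2 hij
        induction i1 using Fin.cases <;> induction i2 using Fin.cases
        · rfl
        · rw [Fin.cons_zero, Fin.cons_succ] at hij
          exact absurd hij.symm (hgv _)
        · rw [Fin.cons_zero, Fin.cons_succ] at hij
          exact absurd hij (hgv _)
        · rw [Fin.cons_succ, Fin.cons_succ] at hij
          exact congrArg Fin.succ (hginj hij)
      · intro i
        induction i using Fin.cases
        · rw [Fin.cons_zero]; exact hS'sub hv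
        · rw [Fin.cons_succ]
          exact hS'sub (Finset.mem_of_mem_erase (Finset.mem_of_mem_filter _ (hgmem _)))
      · intro i1 i2 hne
        induction i1 using Fin.cases <;> induction i2 using Fin.cases
        · exact absurd rfl hne
        · rw [Fin.cons_zero, Fin.cons_succ]; exact hgc _
        · rw [Fin.cons_zero, Fin.cons_succ]
          rw [hsym]
          exact hgc _
        · rw [Fin.cons_succ, Fin.cons_succ]
          exact hgadj _ _ (fun hh => hne (congrArg Fin.succ hh))
    · exfalso
      push_neg at hbr
      set G' : SimpleGraph {x // x ∈ S'} :=
        { Adj := fun u w => u.1 ≠ w.1 ∧ c u.1 w.1 = 1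
          symm := ⟨fun u w hh => ⟨Ne.symm hh.1, (hsym u.1 w.1) ▸ hh.2⟩⟩
          loopless := ⟨fun u hh => hh.1 rfl⟩ } with hG'
      have hG'adj : ∀ u w : {x // x ∈ S'}, G'.Adj u w ↔ (u.1 ≠ w.1 ∧ c u.1 w.1 = 1) := by
        intro u w; rw [hG']
      have hdegeq : ∀ u : {x // x ∈ S'},
          fdeg G' u = ((S'.erase u.1).filter (fun w => c u.1 w = 1)).card := by
        intro u
        show (nbrs G' u).card = _
        refine Finset.card_bij' (fun w _ => w.1)
          (fun w hw => ⟨w, Finset.mem_of_mem_erase (Finset.mem_of_mem_filter _ hw)⟩)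
          ?_ ?_ ?_ ?_
        · intro w hw
          rw [mem_nbrs, hG'adj] at hw
          exact Finset.mem_filter.2 ⟨Finset.mem_erase.2 ⟨Ne.symm hw.1, w.2⟩, hw.2⟩
        · intro w hw
          rw [mem_nbrs, hG'adj]
          have hm := Finset.mem_filter.1 hw
          exact ⟨Ne.symm (Finset.mem_erase.1 hm.1).1, hm.2⟩
        · intro w hw; rfl
        · intro w hw; rfl
      have hdeg : ∀ u : {x // x ∈ S'}, n - 2 ≤ fdeg G' u := by
        intro u
        have h288 : (S'.erase u.1).card = k*(j+1) := by
          rw [Finset.card_erase_of_mem u.2, hS'card]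
          exact Nat.succ_sub_one _
        have hpart := Finset.card_eq_sum_card_fiberwise
          (f := fun w => c u.1 w) (s := S'.erase u.1) (t := Finset.univ)
          (fun x _ => Finset.mem_univ _)
        rw [Fin.sum_univ_three] at hpart
        beta_reduce at hpart
        have hb0 : ((S'.erase u.1).filter (fun w => c u.1 w = 0)).card ≤ ℓ - 1 :=
          star_bound hnostar (by omega) u.1 _ (Finset.notMem_erase _ _)
        have hb2 : ((S'.erase u.1).filter (fun w => c u.1 w = 2)).card ≤ k*j :=
          Nat.lt_succ_iff.1 (hbr u.1 u.2)
        rw [hdegeq u]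
        have hkk : k*(j+1) = k*j + k := by ring
        rw [h288, hkk] at hpart
        omega
      have hnoT' : ¬ Copies T G' := by
        rintro ⟨f, hfinj, hfadj⟩
        refine hnoT ⟨fun u => (f u).1, fun a b hab => hfinj (Subtype.ext hab), ?_⟩
        intro a b hab
        have := (hG'adj _ _).1 (hfadj hab)
        rw [colorGraph, SimpleGraph.fromRel_adj]
        exact ⟨this.1, Or.inl this.2⟩
      have hdvd := lemma_KEY T hT hn hstar hdeg hnoT'
      rw [Fintype.card_coe, hS'card] at hdvd
      have h1 : (n-1) ∣ 1 := (Nat.dvd_add_right (hkd.mul_right (j+1))).1 hdvd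
      have := Nat.le_of_dvd one_pos h1
      omega

lemma colorGraph_adj {N : ℕ} {c : Fin N → Fin N → Fin 3} (hsym : ∀ a b, c a b = c b a)
    {i : Fin 3} {u v : Fin N} :
    (colorGraph c i).Adj u v ↔ (u ≠ v ∧ c u v = i) := by
  rw [colorGraph, SimpleGraph.fromRel_adj]
  constructor
  · rintro ⟨hne, h | h⟩
    · exact ⟨hne, h⟩
    · exact ⟨hne, (hsym u v).trans h⟩
  · rintro ⟨hne, h⟩
    exact ⟨hne, Or.inl h⟩

lemma lower_avoid {n ℓ m t : ℕ} (T : SimpleGraph (Fin n)) (hconn : T.Connected)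
    (hn : 4 ≤ n) (hm : 3 ≤ m) (hl : ℓ = t*(n-1)+2) {N : ℕ}
    (hN : N ≤ (t+1)*(n-1)*(m-1)) :
    ¬ RamseyProp3 N (_root_.starGraph ℓ) T (⊤ : SimpleGraph (Fin m)) := by
  intro hram
  have hNP : N ≤ (m-1) * ((t+1) * (n-1)) := by
    calc N ≤ (t+1)*(n-1)*(m-1) := hN
      _ = (m-1) * ((t+1) * (n-1)) := by ring
  set e : Fin ((m-1) * ((t+1) * (n-1))) ≃ Fin (m-1) × (Fin (t+1) × Fin (n-1)) :=
    finProdFinEquiv.symm.trans (Equiv.prodCongr (Equiv.refl _) finProdFinEquiv.symm) with he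
  set ι : Fin N → Fin (m-1) × (Fin (t+1) × Fin (n-1)) :=
    fun v => e (Fin.castLE hNP v) with hι
  have hιinj : Function.Injective ι := by
    intro u v huv
    have := e.injective huv
    exact Fin.castLE_injective _ this
  set grp : Fin N → Fin (m-1) := fun v => (ι v).1 with hgrp
  set blk : Fin N → Fin (t+1) := fun v => (ι v).2.1 with hblk
  set pos : Fin N → Fin (n-1) := fun v => (ι v).2.2 with hpos
  set c : Fin N → Fin N → Fin 3 :=
    fun a b => if grp a = grp b then (if blk a = blk b then 1 else 0) else 2 with hc
  have hceval : ∀ a b, c a b = if grp a = grp b then (if blk a = blk b then 1 else 0) else 2 :=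
    fun a b => rfl
  have hsym : ∀ a b, c a b = c b a := by
    intro a b
    rw [hceval, hceval]
    by_cases h1 : grp a = grp b
    · rw [if_pos h1, if_pos h1.symm]
      by_cases h2 : blk a = blk b
      · rw [if_pos h2, if_pos h2.symm]
      · rw [if_neg h2, if_neg (fun hh => h2 hh.symm)]
    · rw [if_neg h1, if_neg (fun hh => h1 hh.symm)]
  have hc2 : ∀ a b : Fin N, c a b = 2 → grp a ≠ grp b := by
    intro a b hab
    rw [hceval] at hab
    by_cases h1 : grp a = grp b
    · exfalso
      rw [if_pos h1] at hab
      by_cases h2 : blk a = blk b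
      · rw [if_pos h2] at hab
        exact absurd hab (by decide)
      · rw [if_neg h2] at hab
        exact absurd hab (by decide)
    · exact h1
  have hc1 : ∀ a b : Fin N, c a b = 1 → grp a = grp b ∧ blk a = blk b := by
    intro a b hab
    rw [hceval] at hab
    by_cases h1 : grp a = grp b
    · rw [if_pos h1] at hab
      by_cases h2 : blk a = blk b
      · exact ⟨h1, h2⟩
      · rw [if_neg h2] at hab
        exact absurd hab (by decide)
    · rw [if_neg h1] at hab
      exact absurd hab (by decide)
  have hc0 : ∀ a b : Fin N, c a b = 0 → grp a = grp b ∧ blk a ≠ blk b := by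
    intro a b hab
    rw [hceval] at hab
    by_cases h1 : grp a = grp b
    · rw [if_pos h1] at hab
      by_cases h2 : blk a = blk b
      · rw [if_pos h2] at hab
        exact absurd hab (by decide)
      · exact ⟨h1, h2⟩
    · rw [if_neg h1] at hab
      exact absurd hab (by decide)
  rcases hram c hsym with ⟨f, finj, fadj⟩ | ⟨f, finj, fadj⟩ | ⟨f, finj, fadj⟩
  · -- star in color 0
    set x := f 0 with hx
    have hleaf : ∀ i : Fin ℓ, grp (f i.succ) = grp x ∧ blk (f i.succ) ≠ blk x := by
      intro i
      have hadj : (_root_.starGraph ℓ).Adj 0 i.succ := by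
        rw [_root_.starGraph, SimpleGraph.fromRel_adj]
        exact ⟨(Fin.succ_ne_zero i).symm, Or.inl rfl⟩
      have := (colorGraph_adj hsym).1 (fadj hadj)
      have h0 := hc0 _ _ this.2
      exact ⟨h0.1.symm, fun hh => h0.2 hh.symm⟩
    set φ : Fin ℓ → Fin (t+1) × Fin (n-1) := fun i => (blk (f i.succ), pos (f i.succ)) with hφ
    have hφinj : Function.Injective φ := by
      intro i j hij
      rw [hφ] at hij
      have h1 : blk (f i.succ) = blk (f j.succ) := (Prod.ext_iff.1 hij).1
      have h2 : pos (f i.succ) = pos (f j.succ) := (Prod.ext_iff.1 hij).2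
      have h3 : grp (f i.succ) = grp (f j.succ) := (hleaf i).1.trans (hleaf j).1.symm
      have : ι (f i.succ) = ι (f j.succ) := Prod.ext h3 (Prod.ext h1 h2)
      have := finj (hιinj this)
      exact Fin.succ_injective _ this
    have hφmem : ∀ i, φ i ∈ (Finset.univ.erase (blk x)) ×ˢ (Finset.univ : Finset (Fin (n-1))) := by
      intro i
      rw [Finset.mem_product]
      exact ⟨Finset.mem_erase.2 ⟨(hleaf i).2, Finset.mem_univ _⟩, Finset.mem_univ _⟩
    have hcard : ((Finset.univ.erase (blk x)) ×ˢ (Finset.univ : Finset (Fin (n-1)))).card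
        = t * (n-1) := by
      rw [Finset.card_product, Finset.card_erase_of_mem (Finset.mem_univ _)]
      simp
    have hle : ℓ ≤ t * (n-1) := by
      have := Finset.card_le_card_of_injOn (s := Finset.univ) φ (fun i _ => hφmem i)
        (fun i _ j _ hij => hφinj hij)
      rw [hcard] at this
      simpa using this
    omega
  · -- T in color 1
    have hn0 : (0 : ℕ) < n := by omega
    set w₀ : Fin n := ⟨0, hn0⟩ with hw₀
    have hall : ∀ w : Fin n, grp (f w) = grp (f w₀) ∧ blk (f w) = blk (f w₀) := by
      intro w
      have hA : ∀ u ∈ ({w | grp (f w) = grp (f w₀) ∧ blk (f w) = blk (f w₀)} : Set (Fin n)),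
          ∀ w', T.Adj u w' →
          w' ∈ ({w | grp (f w) = grp (f w₀) ∧ blk (f w) = blk (f w₀)} : Set (Fin n)) := by
        intro u hu w' hw'
        have := (colorGraph_adj hsym).1 (fadj hw')
        have h1 := hc1 _ _ this.2
        exact ⟨h1.1.symm.trans hu.1, h1.2.symm.trans hu.2⟩
      exact mem_of_reachable hA (by exact ⟨rfl, rfl⟩) (hconn.preconnected w₀ w)
    have hψinj : Function.Injective (fun w => pos (f w)) := by
      intro u w huw
      have h1 := (hall u).1.trans (hall w).1.symm
      have h2 := (hall u).2.trans (hall w).2.symm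
      have : ι (f u) = ι (f w) := Prod.ext h1 (Prod.ext h2 huw)
      exact finj (hιinj this)
    have := Fintype.card_le_of_injective _ hψinj
    simp only [Fintype.card_fin] at this
    omega
  · -- K_m in color 2
    have hψinj : Function.Injective (fun w => grp (f w)) := by
      intro u w huw
      by_contra hne
      have hadj : (⊤ : SimpleGraph (Fin m)).Adj u w := by
        rw [SimpleGraph.top_adj]
        exact hne
      have := (colorGraph_adj hsym).1 (fadj hadj)
      exact hc2 _ _ this.2 huw
    have := Fintype.card_le_of_injective _ hψinj
    simp only [Fintype.card_fin] at this
    omega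

lemma upper_mem {n ℓ m k : ℕ} (T : SimpleGraph (Fin n)) (hT : T.IsTree) (hn : 4 ≤ n)
    (hm : 1 ≤ m) (hl : 2 ≤ ℓ) (hk : k = ℓ + n - 3) (hkd : (n-1) ∣ k)
    (hstar : ¬ Nonempty (T ≃g _root_.starGraph (n - 1))) :
    RamseyProp3 (k * (m - 1) + 1) (_root_.starGraph ℓ) T (⊤ : SimpleGraph (Fin m)) := by
  intro c hsym
  by_cases h0 : Copies (_root_.starGraph ℓ) (colorGraph c 0)
  · exact Or.inl h0
  by_cases h1 : Copies T (colorGraph c 1)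
  · exact Or.inr (Or.inl h1)
  refine Or.inr (Or.inr ?_)
  obtain ⟨g, hginj, hgmem, hgadj⟩ := main_upper hT hn hl hk hkd hstar hsym h0 h1 (m-1)
    Finset.univ (by simp)
  have hm' : m - 1 + 1 = m := by omega
  refine ⟨fun i => g (Fin.cast hm'.symm i), ?_, ?_⟩
  · intro a b hab
    have := hginj hab
    exact Fin.cast_injective _ this
  · intro a b hab
    rw [SimpleGraph.top_adj] at hab
    have hne : Fin.cast hm'.symm a ≠ Fin.cast hm'.symm b :=
      fun hh => hab (Fin.cast_injective _ hh)
    rw [colorGraph, SimpleGraph.fromRel_adj]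
    exact ⟨fun hh => hab (Fin.cast_injective _ (hginj hh)), Or.inl (hgadj _ _ hne)⟩

end Stmt9

open Stmt9 in
theorem stmt9 (t n ℓ m : ℕ) (hℓ : ℓ = t * (n - 1) + 2)
    (hmod : ¬ (n - 1 ∣ m - 2)) (T : SimpleGraph (Fin n)) (hT : T.IsTree)
    (hstar : ¬ Nonempty (T ≃g _root_.starGraph (n - 1))) :
    ramsey3 (_root_.starGraph ℓ) T (⊤ : SimpleGraph (Fin m)) = (ℓ + n - 3) * (m - 1) + 1 ∧
    ramsey3 (_root_.starGraph ℓ) T (⊤ : SimpleGraph (Fin m)) = (t + 1) * (n - 1) * (m - 1) + 1 := by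
  have hm3 : 3 ≤ m := by
    by_contra hh
    push_neg at hh
    have hz : m - 2 = 0 := by omega
    exact hmod (by rw [hz]; exact dvd_zero _)
  have hn0 : n ≠ 0 := by
    rintro rfl
    obtain ⟨x⟩ := hT.isConnected.nonempty
    exact x.elim0
  have hn1 : n ≠ 1 := by
    rintro rfl
    refine hstar ⟨⟨Equiv.refl (Fin 1), ?_⟩⟩
    intro a b
    have hab : a = b := Subsingleton.elim a b
    subst hab
    simp only [Equiv.refl_apply]
    exact iff_of_false (SimpleGraph.irrefl _) (SimpleGraph.irrefl _)
  have hn2 : n ≠ 2 := by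
    rintro rfl
    exact hmod (one_dvd _)
  have hn3 : n ≠ 3 := by
    rintro rfl
    rcases tree_struct T hT (le_refl 3) with
      ⟨y, z, a, b, _, _, _, hd1, hd2, hd3, hd4, hd5, hd6, _⟩ | hiso
    · have hle : ({y, z, a, b} : Finset (Fin 3)).card ≤ 3 :=
        le_trans (Finset.card_le_univ _) (by simp)
      rw [Finset.card_insert_of_notMem (by simp [hd1, hd2, hd3]),
          Finset.card_insert_of_notMem (by simp [hd4, hd5]),
          Finset.card_insert_of_notMem (by simp [hd6]),
          Finset.card_singleton] at hle
      omega
    · exact hstar hiso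
  have hn4 : 4 ≤ n := by omega
  have hl2 : 2 ≤ ℓ := hℓ ▸ Nat.le_add_left 2 _
  have hkeq : ℓ + n - 3 = (t+1)*(n-1) := by
    rw [hℓ, Nat.succ_mul]
    generalize t*(n-1) = A
    omega
  have hkd : (n-1) ∣ (t+1)*(n-1) := dvd_mul_left _ _
  have hmem : RamseyProp3 ((t+1)*(n-1) * (m - 1) + 1) (_root_.starGraph ℓ) T (⊤ : SimpleGraph (Fin m)) :=
    upper_mem T hT hn4 (by omega) hl2 hkeq.symm hkd hstar
  have hset : (t+1)*(n-1)*(m-1) + 1 ∈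
      {N | RamseyProp3 N (_root_.starGraph ℓ) T (⊤ : SimpleGraph (Fin m))} := hmem
  have hlb : ∀ y ∈ {N | RamseyProp3 N (_root_.starGraph ℓ) T (⊤ : SimpleGraph (Fin m))},
      (t+1)*(n-1)*(m-1) + 1 ≤ y := by
    intro y hy
    by_contra hh
    push_neg at hh
    have hyle : y ≤ (t+1)*(n-1)*(m-1) := Nat.lt_succ_iff.1 hh
    exact lower_avoid T hT.isConnected hn4 hm3 hℓ hyle hy
  have hsinf : ramsey3 (_root_.starGraph ℓ) T (⊤ : SimpleGraph (Fin m)) = (t+1)*(n-1)*(m-1) + 1 :=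
    le_antisymm (Nat.sInf_le hset) (le_csInf ⟨_, hset⟩ hlb)
  constructor
  · rw [hsinf, hkeq]
  · exact hsinf
end

section
/- Let n, m be positive integers, t a non-negative integer, and N an integer with (t+1)(n−1)(m−1) + 1 ≤ N ≤ (t+2)(n−1)(m−1). Let G be a graph on N vertices with minimum degree δ(G) ≥ N − t(n−1) − 1. Then for every tree T on n vertices, every red-blue coloring of E(G) contains a red copy of T or a blue copy of K_m. -/
open SimpleGraph
open scoped Classical

private lemma exit_lemma {α : Type*} {T : SimpleGraph α} {s : Finset α} :
    ∀ {u w : α} (p : T.Walk u w), u ∈ s → w ∉ s → ∃ x y, x ∈ s ∧ y ∉ s ∧ T.Adj x y := by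
  intro u w p
  induction p with
  | nil => exact fun h h' => absurd h h'
  | @cons a b c h p ih =>
    intro hu hw
    by_cases hb : b ∈ s
    · exact ih hb hw
    · exact ⟨a, b, hu, hb, h⟩

private lemma unique_nbr {n : ℕ} {T : SimpleGraph (Fin n)} (hT : T.IsTree)
    {s : Finset (Fin n)}
    (hconn : ∀ u w, u ∈ s → w ∈ s → ∃ q : T.Walk u w, ∀ x ∈ q.support, x ∈ s)
    {b u w : Fin n} (hb : b ∉ s) (hu : u ∈ s) (hw : w ∈ s)
    (h1 : T.Adj b u) (h2 : T.Adj b w) : u = w := by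
  by_contra hne
  obtain ⟨q, hq⟩ := hconn u w hu hw
  have hsup : ∀ x ∈ (q.toPath : T.Walk u w).support, x ∈ s :=
    fun x hx => hq x (SimpleGraph.Walk.support_toPath_subset q hx)
  have hbp : b ∉ (q.toPath : T.Walk u w).support := fun h => hb (hsup b h)
  have hp1 : (SimpleGraph.Walk.cons h1 (q.toPath : T.Walk u w)).IsPath :=
    (q.toPath.2).cons hbp
  have hbw : b ≠ w := fun h => hb (h ▸ hw)
  have hp2 : (SimpleGraph.Walk.cons h2 SimpleGraph.Walk.nil).IsPath := by
    simp [SimpleGraph.Walk.isPath_def, hbw]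
  obtain ⟨p0, -, huniq⟩ := hT.existsUnique_path b w
  have heq := (huniq _ hp1).trans (huniq _ hp2).symm
  have hlen := congrArg SimpleGraph.Walk.length heq
  simp at hlen
  exact hne hlen.eq

private lemma tree_embed {V : Type*} [Fintype V] {n : ℕ} (hn : 1 ≤ n)
    {T : SimpleGraph (Fin n)} (hT : T.IsTree) (H : SimpleGraph V)
    (sV : Finset V) (hsV : sV.Nonempty)
    (hdeg : ∀ v ∈ sV, n - 1 ≤ (sV.filter (fun u => H.Adj v u)).card) :
    Copies T H := by
  classical
  have key : ∀ k, 1 ≤ k → k ≤ n → ∃ (s : Finset (Fin n)) (f : Fin n → V),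
      s.card = k ∧ Set.InjOn f ↑s ∧ (∀ a ∈ s, f a ∈ sV) ∧
      (∀ a b, a ∈ s → b ∈ s → T.Adj a b → H.Adj (f a) (f b)) ∧
      (∀ u w, u ∈ s → w ∈ s → ∃ q : T.Walk u w, ∀ x ∈ q.support, x ∈ s) := by
    intro k
    induction k with
    | zero => omega
    | succ k ih =>
      intro _ hkn
      rcases Nat.eq_zero_or_pos k with hk0 | hk1
      · -- base case: k = 0
        subst hk0
        obtain ⟨v0, hv0⟩ := hsV
        refine ⟨{⟨0, hn⟩}, fun _ => v0, by simp, ?_, by simp [hv0], ?_, ?_⟩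
        · intro a ha b hb _
          simp only [Finset.coe_singleton, Set.mem_singleton_iff] at ha hb
          rw [ha, hb]
        · intro a b ha hb hadj
          simp only [Finset.mem_singleton] at ha hb
          exact absurd (ha ▸ hb ▸ hadj) (T.irrefl)
        · intro u w hu hw
          simp only [Finset.mem_singleton] at hu hw
          subst hu; subst hw
          exact ⟨SimpleGraph.Walk.nil, by simp⟩
      · obtain ⟨s, f, hcardk, hinj, hmem, hadj, hconn⟩ := ih hk1 (by omega)
        obtain ⟨a, ha⟩ : s.Nonempty := Finset.card_pos.1 (by omega)
        obtain ⟨b, hb⟩ : ∃ b, b ∉ s := by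
          by_contra h
          push_neg at h
          have := Finset.eq_univ_iff_forall.2 h
          rw [this, Finset.card_univ, Fintype.card_fin] at hcardk
          omega
        obtain ⟨p⟩ : T.Reachable a b := hT.isConnected.preconnected a b
        obtain ⟨x, y, hx, hy, hxy⟩ := exit_lemma p ha hb
        set nbrs := sV.filter (fun u => H.Adj (f x) u) with hnbrs
        have hn1 : n - 1 ≤ nbrs.card := hdeg _ (hmem x hx)
        obtain ⟨wv, hwn, hwim⟩ : ∃ wv ∈ nbrs, wv ∉ s.image f := by
          by_contra h
          push_neg at h
          have hsub : nbrs ⊆ (s.image f).erase (f x) := by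
            intro u hu
            refine Finset.mem_erase.2 ⟨?_, h u hu⟩
            rintro rfl
            exact H.irrefl (Finset.mem_filter.1 hu).2
          have h1 := Finset.card_le_card hsub
          have h2 := Finset.card_erase_of_mem (Finset.mem_image_of_mem f hx)
          have h3 := Finset.card_image_le (s := s) (f := f)
          omega
        have hwv_sV : wv ∈ sV := (Finset.mem_filter.1 hwn).1
        have hwv_adj : H.Adj (f x) wv := (Finset.mem_filter.1 hwn).2
        set f' := Function.update f y wv with hf'
        have hfs : ∀ a ∈ s, f' a = f a := by
          intro c hc
          exact Function.update_of_ne (fun h => hy (by rwa [h] at hc)) _ _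
        have hfy : f' y = wv := Function.update_self _ _ _
        refine ⟨insert y s, f', ?_, ?_, ?_, ?_, ?_⟩
        · rw [Finset.card_insert_of_notMem hy, hcardk]
        · intro c hc d hd heq
          simp only [Finset.coe_insert, Set.mem_insert_iff, Finset.mem_coe] at hc hd
          rcases hc with hc' | hc <;> rcases hd with hd' | hd
          · rw [hc', hd']
          · rw [hc', hfy, hfs d hd] at heq
            exact absurd (heq ▸ Finset.mem_image_of_mem f hd) hwim
          · rw [hd', hfy, hfs c hc] at heq
            exact absurd (heq.symm ▸ Finset.mem_image_of_mem f hc) hwim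
          · rw [hfs c hc, hfs d hd] at heq
            exact hinj hc hd heq
        · intro c hc
          rcases Finset.mem_insert.1 hc with hc' | hc
          · rw [hc', hfy]; exact hwv_sV
          · rw [hfs c hc]; exact hmem c hc
        · intro c d hc hd hcd
          rcases Finset.mem_insert.1 hc with hc' | hc <;> rcases Finset.mem_insert.1 hd with hd' | hd
          · rw [hc', hd'] at hcd; exact absurd hcd (T.irrefl)
          · rw [hc'] at hcd
            have hxd : x = d := unique_nbr hT hconn hy hx hd hxy.symm hcd
            rw [hc', hfy, hfs d hd, ← hxd]
            exact hwv_adj.symm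
          · rw [hd'] at hcd
            have hxc : x = c := unique_nbr hT hconn hy hx hc hxy.symm hcd.symm
            rw [hd', hfy, hfs c hc, ← hxc]
            exact hwv_adj
          · rw [hfs c hc, hfs d hd]
            exact hadj c d hc hd hcd
        · intro u w hu hw
          rcases Finset.mem_insert.1 hu with hu' | hu <;> rcases Finset.mem_insert.1 hw with hw' | hw
          · rw [hu', hw']; exact ⟨SimpleGraph.Walk.nil, by simp⟩
          · rw [hu']
            obtain ⟨q, hq⟩ := hconn x w hx hw
            refine ⟨SimpleGraph.Walk.cons hxy.symm q, ?_⟩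
            intro z hz
            rcases (SimpleGraph.Walk.mem_support_iff _).1 hz with rfl | hz
            · exact Finset.mem_insert_self _ _
            · exact Finset.mem_insert_of_mem (hq z (by simpa using hz))
          · rw [hw']
            obtain ⟨q, hq⟩ := hconn x u hx hu
            refine ⟨(SimpleGraph.Walk.cons hxy.symm q).reverse, ?_⟩
            intro z hz
            rw [SimpleGraph.Walk.support_reverse, List.mem_reverse] at hz
            rcases (SimpleGraph.Walk.mem_support_iff _).1 hz with rfl | hz
            · exact Finset.mem_insert_self _ _
            · exact Finset.mem_insert_of_mem (hq z (by simpa using hz))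
          · obtain ⟨q, hq⟩ := hconn u w hu hw
            exact ⟨q, fun z hz => Finset.mem_insert_of_mem (hq z hz)⟩
  obtain ⟨s, f, hcard, hinj, -, hadj, -⟩ := key n hn le_rfl
  have hs : s = Finset.univ := Finset.eq_univ_of_card s (by simp [hcard])
  refine ⟨f, fun c d h => hinj (by simp [hs]) (by simp [hs]) h,
    fun c d h => hadj c d (by simp [hs]) (by simp [hs]) h⟩

theorem stmt10 {V : Type*} [Fintype V] (n m t N : ℕ) (hn : 1 ≤ n) (hm : 1 ≤ m)
    (hN1 : (t + 1) * (n - 1) * (m - 1) + 1 ≤ N) (hN2 : N ≤ (t + 2) * (n - 1) * (m - 1))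
    (hcard : Fintype.card V = N) (G : SimpleGraph V)
    (hδ : N - t * (n - 1) - 1 ≤ G.minDegree)
    (T : SimpleGraph (Fin n)) (hT : T.IsTree)
    (R : SimpleGraph V) (hR : R ≤ G) :
    Copies T R ∨ Copies (⊤ : SimpleGraph (Fin m)) (G \ R) := by
  classical
  by_contra hcon
  push_neg at hcon
  obtain ⟨hTc, hKc⟩ := hcon
  have hn2 : 2 ≤ n := by
    by_contra h
    have hn1' : n = 1 := by omega
    subst hn1'
    simp at hN1 hN2
    omega
  have hm2 : 2 ≤ m := by
    by_contra h
    have hm1' : m = 1 := by omega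
    subst hm1'
    simp at hN1 hN2
    omega
  have hNpos : 0 < N := by omega
  have : Nonempty V := Fintype.card_pos_iff.1 (by rw [hcard]; exact hNpos)
  -- degeneracy of the red graph
  have hdegen : ∀ s : Finset V, s.Nonempty →
      ∃ v ∈ s, (s.filter (fun u => R.Adj v u)).card ≤ n - 2 := by
    intro s hs
    by_contra h
    push_neg at h
    refine hTc (tree_embed (by omega) hT R s hs ?_)
    intro v hv
    have := h v hv
    omega
  -- each vertex has few non-neighbors in G
  have hnon : ∀ v : V,
      (Finset.univ.filter (fun u => ¬ G.Adj v u ∧ u ≠ v)).card ≤ t * (n - 1) := by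
    intro v
    have hvn : v ∉ G.neighborFinset v := by simp
    have hsub : Finset.univ.filter (fun u => ¬ G.Adj v u ∧ u ≠ v)
        ⊆ Finset.univ \ insert v (G.neighborFinset v) := by
      intro u hu
      simp only [Finset.mem_filter, Finset.mem_sdiff, Finset.mem_univ, Finset.mem_insert,
        SimpleGraph.mem_neighborFinset, true_and] at hu ⊢
      tauto
    have h1 := Finset.card_le_card hsub
    have h2 : (Finset.univ \ insert v (G.neighborFinset v)).card + (G.degree v + 1) = N := by
      have h3 := Finset.card_sdiff_add_card_eq_card
        (Finset.subset_univ (insert v (G.neighborFinset v)))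
      rwa [Finset.card_univ, hcard, Finset.card_insert_of_notMem hvn] at h3
    have h3 : N - t * (n - 1) - 1 ≤ G.degree v := le_trans hδ (G.minDegree_le_degree v)
    generalize hP : t * (n - 1) = P at h3 ⊢
    omega
  -- greedy blue clique construction
  have hclique : ∀ j, j ≤ m → ∃ c s : Finset V, c.card = j ∧
      (∀ a ∈ c, ∀ b ∈ c, a ≠ b → (G \ R).Adj a b) ∧
      (∀ a ∈ c, ∀ v ∈ s, (G \ R).Adj a v) ∧
      (∀ a ∈ c, a ∉ s) ∧
      N ≤ s.card + j * ((t + 1) * (n - 1)) := by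
    intro j
    induction j with
    | zero =>
      intro _
      exact ⟨∅, Finset.univ, by simp, by simp, by simp, by simp,
        by simp [Finset.card_univ, hcard]⟩
    | succ j ih =>
      intro hj
      obtain ⟨c, s, hcc, hblue, hcs, hdisj, hsize⟩ := ih (by omega)
      have hjm : j ≤ m - 1 := by omega
      have hge : j * ((t + 1) * (n - 1)) + 1 ≤ N := by
        calc j * ((t + 1) * (n - 1)) + 1
            ≤ (m - 1) * ((t + 1) * (n - 1)) + 1 :=
              Nat.add_le_add_right (Nat.mul_le_mul_right _ hjm) 1
          _ = (t + 1) * (n - 1) * (m - 1) + 1 := by ring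
          _ ≤ N := hN1
      have hsne : s.Nonempty := Finset.card_pos.1 (by
        generalize hQ : j * ((t + 1) * (n - 1)) = Q at hsize hge
        omega)
      obtain ⟨v, hv, hvdeg⟩ := hdegen s hsne
      set s' := (s.erase v).filter (fun u => (G \ R).Adj v u) with hs'
      have hs'sub : s' ⊆ s := (Finset.filter_subset _ _).trans (Finset.erase_subset _ _)
      have hvadj : ∀ u ∈ s', (G \ R).Adj v u := fun u hu => (Finset.mem_filter.1 hu).2
      have hvc : v ∉ c := fun h => hdisj v h hv
      refine ⟨insert v c, s', ?_, ?_, ?_, ?_, ?_⟩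
      · rw [Finset.card_insert_of_notMem hvc, hcc]
      · intro a ha b hb hab
        rcases Finset.mem_insert.1 ha with ha' | ha <;> rcases Finset.mem_insert.1 hb with hb' | hb
        · rw [ha', hb'] at hab; exact absurd rfl hab
        · rw [ha']; exact (hcs b hb v hv).symm
        · rw [hb']; exact hcs a ha v hv
        · exact hblue a ha b hb hab
      · intro a ha u hu
        rcases Finset.mem_insert.1 ha with ha' | ha
        · rw [ha']; exact hvadj u hu
        · exact hcs a ha u (hs'sub hu)
      · intro a ha
        rcases Finset.mem_insert.1 ha with ha' | ha
        · rw [ha']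
          exact fun h => (Finset.mem_erase.1 (Finset.mem_filter.1 h).1).1 rfl
        · exact fun h => hdisj a ha (hs'sub h)
      · have hsub2 : s ⊆ s' ∪ {v} ∪ s.filter (fun u => R.Adj v u)
            ∪ Finset.univ.filter (fun u => ¬ G.Adj v u ∧ u ≠ v) := by
          intro u hu
          simp only [Finset.mem_union, Finset.mem_singleton, Finset.mem_filter,
            Finset.mem_univ, true_and]
          by_cases h1 : u = v
          · tauto
          by_cases h2 : R.Adj v u
          · tauto
          by_cases h3 : G.Adj v u
          · left; left; left
            exact Finset.mem_filter.2 ⟨Finset.mem_erase.2 ⟨h1, hu⟩,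
              (SimpleGraph.sdiff_adj _ _ _ _).2 ⟨h3, h2⟩⟩
          · tauto
        have hcard2 := Finset.card_le_card hsub2
        have hcard3 : (s' ∪ {v} ∪ s.filter (fun u => R.Adj v u)
            ∪ Finset.univ.filter (fun u => ¬ G.Adj v u ∧ u ≠ v)).card
            ≤ s'.card + 1 + (n - 2) + t * (n - 1) := by
          refine le_trans (Finset.card_union_le _ _) (Nat.add_le_add ?_ (hnon v))
          refine le_trans (Finset.card_union_le _ _) (Nat.add_le_add ?_ hvdeg)
          refine le_trans (Finset.card_union_le _ _) (Nat.add_le_add_left ?_ _)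
          simp
        have key1 : s.card ≤ s'.card + 1 + (n - 2) + t * (n - 1) := le_trans hcard2 hcard3
        have hexp : (j + 1) * ((t + 1) * (n - 1))
            = j * ((t + 1) * (n - 1)) + (t * (n - 1) + (n - 1)) := by ring
        rw [hexp]
        generalize hP : t * (n - 1) = P at key1 ⊢
        generalize hQ : j * ((t + 1) * (n - 1)) = Q at hsize ⊢
        omega
  obtain ⟨c, s, hcc, hblue, -, -, -⟩ := hclique m le_rfl
  have e := c.equivFin
  rw [hcc] at e
  refine hKc ⟨fun i => (e.symm i : V), fun i j h => e.symm.injective (Subtype.ext h), ?_⟩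
  intro i j hij
  have hne : (e.symm i : V) ≠ (e.symm j : V) := fun h =>
    hij.ne (e.symm.injective (Subtype.ext h))
  exact hblue _ (e.symm i).2 _ (e.symm j).2 hne
end

section
/- Fix n, m, t and N with (t+1)(n−1)(m−1)+1 ≤ N ≤ (t+2)(n−1)(m−1). There exists a graph G on N vertices with minimum degree δ(G) = N − ⌈((t+1)/(t+2))·⌈N/(m−1)⌉⌉ − 1 and a red-blue coloring of E(G) with no red tree on n vertices of any shape and no blue K_m. -/
open SimpleGraph
open scoped Classical

lemma cardAP (N d a : ℕ) (hd : 0 < d) (ha : a < d) :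
    ((Finset.range N).filter (fun x => x % d = a)).card = (N - a + d - 1) / d := by
  rw [← Finset.card_range ((N - a + d - 1) / d)]
  apply Finset.card_bij' (fun x _ => x / d) (fun y _ => a + d * y)
  · intro x hx
    simp only [Finset.mem_filter, Finset.mem_range] at hx ⊢
    obtain ⟨hxN, hxa⟩ := hx
    have h1 : a ≤ x := hxa ▸ Nat.mod_le x d
    have hmod := Nat.div_add_mod x d
    have key : (x/d + 1) * d ≤ N - a + d - 1 := by
      have hr : (x/d + 1) * d = d * (x/d) + d := by ring
      omega
    have := (Nat.le_div_iff_mul_le hd).2 key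
    omega
  · intro y hy
    simp only [Finset.mem_range] at hy
    simp only [Finset.mem_filter, Finset.mem_range]
    refine ⟨?_, by simp [Nat.add_mul_mod_self_left, Nat.mod_eq_of_lt ha]⟩
    have h2 : (y + 1) * d ≤ N - a + d - 1 := by
      rw [← Nat.le_div_iff_mul_le hd]; omega
    have h0 : 1 * d ≤ N - a + d - 1 := by
      rw [← Nat.le_div_iff_mul_le hd]; omega
    have h4 : (y+1)*d = d*y + d := by ring
    omega
  · intro x hx
    simp only [Finset.mem_filter, Finset.mem_range] at hx
    have hmod := Nat.div_add_mod x d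
    omega
  · intro y hy
    rw [Nat.add_mul_div_left _ _ hd, Nat.div_eq_of_lt ha]
    simp

lemma subMono (s : ℕ) : ∀ a b : ℕ, a ≤ b → a - a / s ≤ b - b / s := by
  intro a b hab
  induction b with
  | zero =>
    obtain rfl : a = 0 := by omega
    exact le_refl _
  | succ b ih =>
    rcases Nat.lt_or_ge a (b+1) with h | h
    · have h1 : (b+1) / s ≤ b / s + 1 := by
        rcases Nat.eq_zero_or_pos s with rfl | hs
        · simp
        · calc (b+1)/s ≤ (b+s)/s := Nat.div_le_div_right (by omega)
            _ = b/s + 1 := Nat.add_div_right _ hs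
      have h2 : b / s ≤ b := Nat.div_le_self _ _
      have h3 : (b+1) / s ≤ b + 1 := Nat.div_le_self _ _
      have := ih (by omega)
      omega
    · obtain rfl : a = b + 1 := by omega
      exact le_refl _

lemma ceilNatDiv (N k : ℕ) (hk : 0 < k) : ⌈(N : ℚ) / (k : ℚ)⌉ = ((N + k - 1) / k : ℕ) := by
  set q := (N + k - 1) / k with hq
  have hk' : (0:ℚ) < k := by exact_mod_cast hk
  have h1 : q * k ≤ N + k - 1 := Nat.div_mul_le_self _ _
  have h2 : N + k - 1 < (q + 1) * k := by
    rw [← Nat.div_lt_iff_lt_mul hk]; omega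
  have hr : (q+1)*k = q*k + k := by ring
  have hub : N ≤ q * k := by omega
  have hlb : q * k < N + k := by omega
  rw [Int.ceil_eq_iff]
  constructor
  · rw [lt_div_iff₀ hk']
    push_cast
    have : (q:ℚ) * k < N + k := by exact_mod_cast hlb
    linarith
  · rw [div_le_iff₀ hk']
    push_cast
    exact_mod_cast hub

lemma ceilFrac (t a : ℕ) : ⌈((t + 1 : ℚ) / (t + 2)) * (a : ℚ)⌉ = ((a - a / (t+2) : ℕ) : ℤ) := by
  set d := a / (t+2) with hd
  set e := a % (t+2) with he
  have hmod : (t+2) * d + e = a := Nat.div_add_mod a (t+2)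
  have helt : e < t + 2 := Nat.mod_lt _ (by omega)
  have hr : (t+2) * d = (t+1)*d + d := by ring
  have hz : a - d = (t+1) * d + e := by omega
  rw [Int.ceil_eq_iff]
  have hs : (0:ℚ) < (t:ℚ) + 2 := by positivity
  constructor
  · rw [div_mul_eq_mul_div, lt_div_iff₀ hs]
    push_cast [hz]
    have h1 : ((t:ℚ)+2) * d + e = a := by exact_mod_cast hmod
    have h2 : (e:ℚ) < (t:ℚ) + 2 := by exact_mod_cast helt
    nlinarith
  · rw [div_mul_eq_mul_div, div_le_iff₀ hs]
    push_cast [hz]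
    have h1 : ((t:ℚ)+2) * d + e = a := by exact_mod_cast hmod
    have h3 : (0:ℚ) ≤ (e:ℚ) := by positivity
    nlinarith

lemma cardFinAP (N d a : ℕ) (hd : 0 < d) (ha : a < d) :
    (Finset.univ.filter (fun w : Fin N => w.val % d = a)).card = (N - a + d - 1) / d := by
  have himg : Finset.image Fin.val (Finset.univ.filter (fun w : Fin N => w.val % d = a))
      = (Finset.range N).filter (fun x => x % d = a) := by
    ext x
    simp only [Finset.mem_image, Finset.mem_filter, Finset.mem_univ, true_and, Finset.mem_range]
    constructor
    · rintro ⟨w, hw, rfl⟩; exact ⟨w.isLt, hw⟩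
    · rintro ⟨hx, hp⟩; exact ⟨⟨x, hx⟩, hp, rfl⟩
  rw [← cardAP N d a hd ha, ← himg, Finset.card_image_of_injective _ Fin.val_injective]

lemma degEq (N k s : ℕ) (hk : 0 < k) (hs : 0 < s) (v : Fin N) :
    (SimpleGraph.fromRel (fun a b : Fin N =>
        (a:ℕ) % (k*s) = (b:ℕ) % (k*s) ∨ (a:ℕ) % k ≠ (b:ℕ) % k)).degree v
      = N - 1 - ((N - (v:ℕ)%k + k - 1)/k - (N - (v:ℕ)%(k*s) + k*s - 1)/(k*s)) := by
  set M := k * s with hM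
  have hMpos : 0 < M := Nat.mul_pos hk hs
  have hdvd : ∀ x : ℕ, x % M % k = x % k := fun x => Nat.mod_mod_of_dvd x ⟨s, rfl⟩
  set G := SimpleGraph.fromRel (fun a b : Fin N =>
      (a:ℕ) % M = (b:ℕ) % M ∨ (a:ℕ) % k ≠ (b:ℕ) % k) with hG
  have hnf : G.neighborFinset v = Finset.univ.filter (fun w => G.Adj v w) := by
    ext w; simp
  set Pset := Finset.univ.filter (fun w : Fin N => (w:ℕ)%k = (v:ℕ)%k) with hPset
  set Qset := Finset.univ.filter (fun w : Fin N => (w:ℕ)%M = (v:ℕ)%M) with hQset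
  have hQP : Qset ⊆ Pset := by
    intro w hw
    simp only [hQset, hPset, Finset.mem_filter, Finset.mem_univ, true_and] at hw ⊢
    rw [← hdvd w, ← hdvd v, hw]
  have hBsub : Pset \ Qset ⊆ Finset.univ.erase v := by
    intro w hw
    simp only [hPset, hQset, Finset.mem_sdiff, Finset.mem_filter, Finset.mem_univ, true_and,
      not_and] at hw
    simp only [Finset.mem_erase, Finset.mem_univ, and_true]
    rintro rfl
    exact hw.2 rfl
  have hAset : Finset.univ.filter (fun w => G.Adj v w) = (Finset.univ.erase v) \ (Pset \ Qset) := by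
    ext w
    simp only [hPset, hQset, Finset.mem_filter, Finset.mem_univ, true_and, Finset.mem_sdiff,
      Finset.mem_erase, hG, SimpleGraph.fromRel_adj, and_true, not_and, not_not]
    constructor
    · rintro ⟨hne, h⟩
      have hne' : w ≠ v := fun h' => hne h'.symm
      refine ⟨hne', fun hkk => ?_⟩
      rcases h with (h | h) | (h | h)
      · exact h.symm
      · exact absurd hkk.symm h
      · exact h
      · exact absurd hkk h
    · rintro ⟨hne, h⟩
      refine ⟨fun h' => hne h'.symm, ?_⟩
      by_cases hkk : (w:ℕ)%k = (v:ℕ)%k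
      · exact Or.inl (Or.inl (h hkk).symm)
      · exact Or.inl (Or.inr (fun h' => hkk h'.symm))
  have hcards : G.degree v = N - 1 - (Pset \ Qset).card := by
    rw [SimpleGraph.degree, hnf, hAset, Finset.card_sdiff_of_subset hBsub, Finset.card_erase_of_mem
      (Finset.mem_univ v), Finset.card_univ, Fintype.card_fin]
  have hPQcard : (Pset \ Qset).card = Pset.card - Qset.card := by
    rw [Finset.card_sdiff_of_subset hQP]
  have hPcard : Pset.card = (N - (v:ℕ)%k + k - 1)/k := by
    rw [hPset]; exact cardFinAP N k _ hk (Nat.mod_lt _ hk)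
  have hQcard : Qset.card = (N - (v:ℕ)%M + M - 1)/M := by
    rw [hQset]; exact cardFinAP N M _ hMpos (Nat.mod_lt _ hMpos)
  rw [hcards, hPQcard, hPcard, hQcard]

theorem stmt13 (n m t N : ℕ) (hn : 1 ≤ n) (hm : 1 ≤ m)
    (hN1 : (t + 1) * (n - 1) * (m - 1) + 1 ≤ N) (hN2 : N ≤ (t + 2) * (n - 1) * (m - 1)) :
    ∃ G : SimpleGraph (Fin N),
      (G.minDegree : ℤ) =
        (N : ℤ) - ⌈((t + 1 : ℚ) / (t + 2)) * (⌈(N : ℚ) / ((m : ℚ) - 1)⌉ : ℚ)⌉ - 1 ∧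
      ∃ R ≤ G, (∀ T : SimpleGraph (Fin n), T.IsTree → ¬ Copies T R) ∧
        ¬ Copies (⊤ : SimpleGraph (Fin m)) (G \ R) := by
  classical
  have hm2 : 2 ≤ m := by
    by_contra h
    obtain rfl : m = 1 := by omega
    simp at hN2
    omega
  have hn2 : 2 ≤ n := by
    by_contra h
    obtain rfl : n = 1 := by omega
    simp at hN2
    omega
  set k := m - 1 with hkdef
  set s := t + 2 with hsdef
  have hk : 0 < k := by omega
  have hs : 0 < s := by omega
  set M := k * s with hMdef
  have hM : 0 < M := Nat.mul_pos hk hs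
  have hNlb : k * (t + 1) + 1 ≤ N := by
    have h1 : (t+1) * 1 * k ≤ (t+1) * (n-1) * k := by
      apply Nat.mul_le_mul_right
      apply Nat.mul_le_mul_left
      omega
    have h2 : (t+1) * 1 * k = k * (t+1) := by ring
    omega
  have hNub : N ≤ (n - 1) * M := by
    have : s * (n - 1) * k = (n-1) * M := by rw [hMdef]; ring
    omega
  have hN0 : 0 < N := by omega
  have hdvd : ∀ x : ℕ, x % M % k = x % k := fun x => Nat.mod_mod_of_dvd x ⟨s, rfl⟩
  set G := SimpleGraph.fromRel (fun a b : Fin N =>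
      (a:ℕ) % M = (b:ℕ) % M ∨ (a:ℕ) % k ≠ (b:ℕ) % k) with hG
  set R := SimpleGraph.fromRel (fun a b : Fin N => (a:ℕ) % M = (b:ℕ) % M) with hR
  have hdeg : ∀ v : Fin N, G.degree v
      = N - 1 - ((N - (v:ℕ)%k + k - 1)/k - (N - (v:ℕ)%M + M - 1)/M) := by
    intro v
    exact degEq N k s hk hs v
  set pmax := (N + k - 1) / k with hpmax
  set Dmax := pmax - pmax / s with hDmax
  -- the special vertex
  have hv0lt : k * (t + 1) < N := by omega
  set v0 : Fin N := ⟨k * (t + 1), hv0lt⟩ with hv0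
  have hkts : k * (t+1) + k = M := by rw [hMdef, hsdef]; ring
  have hdeg0 : G.degree v0 = N - 1 - Dmax := by
    rw [hdeg v0]
    have hval : (v0 : ℕ) = k * (t+1) := rfl
    have e1 : (v0 : ℕ) % k = 0 := by rw [hval]; exact Nat.mul_mod_right k (t+1)
    have e2 : (v0 : ℕ) % M = k * (t+1) := by rw [hval]; exact Nat.mod_eq_of_lt (by omega)
    rw [e1, e2]
    have e3 : N - 0 + k - 1 = N + k - 1 := by omega
    have e4 : N - k * (t+1) + M - 1 = N + k - 1 := by omega
    rw [e3, e4]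
    have e5 : (N + k - 1) / M = pmax / s := by
      rw [hpmax, Nat.div_div_eq_div_mul, ← hMdef]
    rw [e5, ← hpmax, ← hDmax]
  have hbound : ∀ v : Fin N, N - 1 - Dmax ≤ G.degree v := by
    intro v
    rw [hdeg v]
    have hsuff : (N - (v:ℕ)%k + k - 1)/k - (N - (v:ℕ)%M + M - 1)/M ≤ Dmax := by
      set r := (v:ℕ) % k with hr
      set c := (v:ℕ) % M with hc
      have hrc : c % k = r := hdvd (v:ℕ)
      have hcN : c < N := lt_of_le_of_lt (Nat.mod_le _ _) v.isLt
      have hcM : c < M := Nat.mod_lt _ hM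
      have hcu : c / k < s := by
        rw [Nat.div_lt_iff_lt_mul hk]
        have : s * k = M := by rw [hMdef]; ring
        omega
      have hcdecomp : k * (c/k) + r = c := by
        conv_rhs => rw [← Nat.div_add_mod c k]
        rw [hrc]
      have hA : (N - r + k - 1)/M ≤ (N - c + M - 1)/M := by
        apply Nat.div_le_div_right
        have h1 : k * (c/k) ≤ k * (s-1) := Nat.mul_le_mul_left k (by omega)
        have h2 : k * (s-1) + k = M := by
          have hs1 : s - 1 + 1 = s := by omega
          calc k*(s-1) + k = k*((s-1)+1) := by ring
            _ = M := by rw [hs1, hMdef]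
        have hrlec : r ≤ c := by omega
        omega
      have hPQ : ((N - r + k - 1)/k)/s = (N - r + k - 1)/M := by
        rw [Nat.div_div_eq_div_mul, ← hMdef]
      have hPle : (N - r + k - 1)/k ≤ pmax := by
        apply Nat.div_le_div_right
        omega
      have hmono := subMono s ((N - r + k - 1)/k) pmax hPle
      omega
    omega
  haveI : Nonempty (Fin N) := ⟨v0⟩
  have hmd : G.minDegree = N - 1 - Dmax := by
    apply le_antisymm
    · rw [← hdeg0]; exact G.minDegree_le_degree v0
    · exact G.le_minDegree_of_forall_le_degree _ hbound
  -- bounds needed for the final cast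
  have hpmaxN : pmax ≤ N := by
    have h1 : (N + k - 1)/k < N + 1 := by
      rw [Nat.div_lt_iff_lt_mul hk]
      have h2 : N ≤ N * k := Nat.le_mul_of_pos_right N hk
      have h3 : (N+1)*k = N*k + k := by ring
      omega
    omega
  have hpmaxs : s ≤ pmax := by
    rw [hpmax, Nat.le_div_iff_mul_le hk]
    have : s * k = M := by rw [hMdef]; ring
    omega
  have hdiv1 : 1 ≤ pmax / s := (Nat.one_le_div_iff hs).2 hpmaxs
  have hDle : Dmax ≤ N - 1 := by
    have : pmax / s ≤ pmax := Nat.div_le_self _ _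
    omega
  refine ⟨G, ?_, R, ?_, ?_, ?_⟩
  · -- minimum degree
    have hmk : ((k:ℕ):ℚ) = (m:ℚ) - 1 := by
      rw [hkdef]
      push_cast [Nat.cast_sub hm]
      ring
    rw [← hmk, ceilNatDiv N k hk, ← hpmax]
    have : (((pmax:ℕ):ℤ):ℚ) = ((pmax:ℕ):ℚ) := by push_cast; ring
    rw [this, ceilFrac t pmax, ← hsdef, ← hDmax]
    convert congrArg (fun x : ℕ => (x:ℤ)) hmd using 2
    congr! 1
    omega
  · -- R ≤ G
    intro a b hab
    rw [hR, SimpleGraph.fromRel_adj] at hab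
    rw [hG, SimpleGraph.fromRel_adj]
    tauto
  · -- no red tree
    rintro T hT ⟨f, hfinj, hfadj⟩
    have key : ∀ a b : Fin n, T.Reachable a b → ((f a : Fin N):ℕ) % M = ((f b : Fin N):ℕ) % M := by
      intro a b hab
      obtain ⟨w⟩ := hab
      induction w with
      | nil => rfl
      | cons h p ih =>
        have h2 := hfadj h
        rw [hR, SimpleGraph.fromRel_adj] at h2
        obtain ⟨-, h3⟩ := h2
        rcases h3 with h3 | h3 <;> omega
    have a0 : Fin n := ⟨0, by omega⟩
    set c0 := ((f a0 : Fin N):ℕ) % M with hc0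
    have hc0M : c0 < M := Nat.mod_lt _ hM
    set S := Finset.univ.filter (fun w : Fin N => w.val % M = c0) with hS
    have hmem : ∀ a : Fin n, f a ∈ S := by
      intro a
      simp only [hS, Finset.mem_filter, Finset.mem_univ, true_and]
      exact key a a0 (hT.isConnected.preconnected a a0)
    have hcard : Fintype.card (Fin n) ≤ S.card := by
      apply Finset.card_le_card_of_injOn f (fun a _ => hmem a) hfinj.injOn
    rw [Fintype.card_fin] at hcard
    have hScard : S.card = (N - c0 + M - 1)/M := by
      rw [hS]; exact cardFinAP N M c0 hM hc0M
    have hle : (N - c0 + M - 1)/M ≤ (N + M - 1)/M := Nat.div_le_div_right (by omega)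
    have hlt : (N + M - 1)/M < n := by
      rw [Nat.div_lt_iff_lt_mul hM]
      have h5 : (n - 1 + 1) * M = (n-1)*M + M := by ring
      have h6 : n - 1 + 1 = n := by omega
      rw [h6] at h5
      omega
    omega
  · -- no blue K_m
    rintro ⟨f, hfinj, hfadj⟩
    have hne : ∀ a b : Fin m, a ≠ b → ((f a : Fin N):ℕ) % k ≠ ((f b : Fin N):ℕ) % k := by
      intro a b hab
      have h2 := hfadj (by rw [SimpleGraph.top_adj]; exact hab)
      rw [SimpleGraph.sdiff_adj, hG, hR, SimpleGraph.fromRel_adj, SimpleGraph.fromRel_adj] at h2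
      obtain ⟨⟨hne', hor⟩, hnR⟩ := h2
      have hnM : ¬(((f a : Fin N):ℕ) % M = ((f b : Fin N):ℕ) % M) := by
        intro hMeq
        exact hnR ⟨hne', Or.inl hMeq⟩
      rcases hor with (h | h) | (h | h)
      · exact absurd h hnM
      · exact h
      · exact absurd h.symm hnM
      · exact fun h' => h h'.symm
    set g : Fin m → Fin k := fun a => ⟨((f a : Fin N):ℕ) % k, Nat.mod_lt _ hk⟩ with hg
    have hginj : Function.Injective g := by
      intro a b hab
      by_contra hne'
      exact hne a b hne' (congrArg Fin.val hab)
    have := Fintype.card_le_of_injective g hginj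
    rw [Fintype.card_fin, Fintype.card_fin] at this
    omega
end
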